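/- arXiv:0810.3277 — 9 statements merged into one kernel-verified Lean document; each statement's English description precedes it below -/
import Mathlib

section
/- (Theorem 2) Let Σ be a Lebesgue measurable subset of {x ∈ ℝ : w(x) > 0}. Suppose that for Lebesgue-a.e. x₀ ∈ Σ, condition (3) holds at x₀ and lim_{n→∞} (1/(n+1)) K_n(x₀, x₀) exists, is strictly positive, and is finite. Then for Lebesgue-a.e. x₀ ∈ Σ, the Lubinsky wiggle condition holds: K_n(x₀ + a/n, x₀ + a/n)/K_n(x₀, x₀) → 1 as n → ∞, uniformly for a ∈ [−A, A], for every A < ∞. -/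
open MeasureTheory Filter Set
open scoped ENNReal NNReal

/-- The Christoffel–Darboux kernel `K_n(x, y) = Σ_{j=0}^n p_j(x) p_j(y)` (for real arguments,
the orthonormal polynomials being real). -/
noncomputable def CDKernel (p : ℕ → Polynomial ℝ) (n : ℕ) (x y : ℝ) : ℝ :=
  ∑ j ∈ Finset.range (n + 1), (p j).eval x * (p j).eval y

/-- The (topological) support of a measure on `ℝ`: points all of whose neighborhoods have
positive measure. -/
def measSupport (μ : Measure ℝ) : Set ℝ := {x : ℝ | ∀ U ∈ nhds x, μ U ≠ 0}

section Aux
open Polynomial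

lemma poly_deriv_bound (P : Polynomial ℝ) (x ρ M : ℝ) (hρ : 0 < ρ)
    (hM : ∀ z : ℂ, z ∈ Metric.sphere (x : ℂ) ρ → ‖(aeval z) P‖ ≤ M) :
    |eval x (derivative P)| ≤ M / ρ := by
  have hd : Differentiable ℂ (fun z : ℂ => (aeval z) P) := by
    simpa using (P.map (algebraMap ℝ ℂ)).differentiable
  have h1 : deriv (fun z : ℂ => (aeval z) P) (x : ℂ) = (aeval ((x : ℝ) : ℂ)) (derivative P) :=
    P.deriv_aeval
  have h2 := Complex.norm_deriv_le_of_forall_mem_sphere_norm_le hρ hd.diffContOnCl hM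
  rw [h1] at h2
  have h3 : (aeval ((x : ℝ) : ℂ)) (derivative P) = ((eval x (derivative P) : ℝ) : ℂ) := by
    rw [show ((x : ℝ) : ℂ) = algebraMap ℝ ℂ x from rfl, aeval_algebraMap_apply]
    simp
  rw [h3] at h2
  simpa using h2

-- sum of squared derivatives bound
lemma sum_deriv_sq_bound (p : ℕ → Polynomial ℝ) (n : ℕ) (x ρ B : ℝ) (hρ : 0 < ρ) (hB : 0 ≤ B)
    (hM : ∀ z : ℂ, z ∈ Metric.sphere (x : ℂ) ρ →
      ∑ j ∈ Finset.range (n + 1), ‖(aeval z) (p j)‖ ^ 2 ≤ B) :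
    ∑ j ∈ Finset.range (n + 1), (eval x (derivative (p j))) ^ 2 ≤ B / ρ ^ 2 := by
  set v : ℕ → ℝ := fun j => eval x (derivative (p j)) with hv
  set S : ℝ := ∑ j ∈ Finset.range (n + 1), v j ^ 2 with hS
  have hS0 : 0 ≤ S := Finset.sum_nonneg fun j _ => sq_nonneg _
  rcases hS0.eq_or_lt with h | hSpos
  · rw [← h]; positivity
  set P : Polynomial ℝ := ∑ j ∈ Finset.range (n + 1), Polynomial.C (v j) * p j with hP
  have hPd : eval x (derivative P) = S := by
    rw [hP, derivative_sum]
    rw [eval_finset_sum]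
    refine Finset.sum_congr rfl fun j _ => ?_
    rw [derivative_C_mul, eval_C_mul]
    ring
  have hPM : ∀ z : ℂ, z ∈ Metric.sphere (x : ℂ) ρ →
      ‖(aeval z) P‖ ≤ Real.sqrt S * Real.sqrt B := by
    intro z hz
    have h1 : (aeval z) P = ∑ j ∈ Finset.range (n + 1), (v j : ℂ) * (aeval z) (p j) := by
      rw [hP, map_sum]
      refine Finset.sum_congr rfl fun j _ => ?_
      rw [map_mul, aeval_C]
      rfl
    rw [h1]
    calc ‖∑ j ∈ Finset.range (n + 1), (v j : ℂ) * (aeval z) (p j)‖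
        ≤ ∑ j ∈ Finset.range (n + 1), |v j| * ‖(aeval z) (p j)‖ := by
          refine (norm_sum_le _ _).trans (le_of_eq ?_)
          refine Finset.sum_congr rfl fun j _ => ?_
          rw [norm_mul, Complex.norm_real, Real.norm_eq_abs]
      _ ≤ Real.sqrt S * Real.sqrt B := by
          have hcs := Finset.sum_mul_sq_le_sq_mul_sq (Finset.range (n + 1))
            (fun j => |v j|) (fun j => ‖(aeval z) (p j)‖)
          have hS' : ∑ j ∈ Finset.range (n + 1), |v j| ^ 2 = S := by
            rw [hS]; exact Finset.sum_congr rfl fun j _ => sq_abs _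
          have hB' : ∑ j ∈ Finset.range (n + 1), ‖(aeval z) (p j)‖ ^ 2 ≤ B := hM z hz
          have hnn : 0 ≤ ∑ j ∈ Finset.range (n + 1), |v j| * ‖(aeval z) (p j)‖ :=
            Finset.sum_nonneg fun j _ => mul_nonneg (abs_nonneg _) (norm_nonneg _)
          have h2 : (∑ j ∈ Finset.range (n + 1), |v j| * ‖(aeval z) (p j)‖) ^ 2 ≤ S * B := by
            refine hcs.trans ?_
            rw [hS']
            exact mul_le_mul_of_nonneg_left hB' hS0
          calc ∑ j ∈ Finset.range (n + 1), |v j| * ‖(aeval z) (p j)‖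
              = Real.sqrt ((∑ j ∈ Finset.range (n + 1), |v j| * ‖(aeval z) (p j)‖) ^ 2) :=
                (Real.sqrt_sq hnn).symm
            _ ≤ Real.sqrt (S * B) := Real.sqrt_le_sqrt h2
            _ = Real.sqrt S * Real.sqrt B := Real.sqrt_mul hS0 B
  have hfin := poly_deriv_bound P x ρ _ hρ hPM
  rw [hPd] at hfin
  have h4 : S ≤ Real.sqrt S * Real.sqrt B / ρ := (le_abs_self S).trans hfin
  have h5 : Real.sqrt S ^ 2 = S := Real.sq_sqrt hS0
  have h6 : Real.sqrt B ^ 2 = B := Real.sq_sqrt hB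
  have h7 : 0 < Real.sqrt S := Real.sqrt_pos.mpr hSpos
  have h8 : S * ρ ≤ Real.sqrt S * Real.sqrt B := (le_div_iff₀ hρ).mp h4
  have h9 : (S * ρ) ^ 2 ≤ S * B := by
    calc (S * ρ) ^ 2 ≤ (Real.sqrt S * Real.sqrt B) ^ 2 := by
          exact pow_le_pow_left₀ (mul_nonneg hS0 hρ.le) h8 2
      _ = S * B := by rw [mul_pow, h5, h6]
  rw [le_div_iff₀ (pow_pos hρ 2)]
  nlinarith


lemma aeval_real_norm (P : Polynomial ℝ) (x : ℝ) : ‖(aeval ((x : ℝ) : ℂ)) P‖ = |eval x P| := by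
  rw [show ((x : ℝ) : ℂ) = algebraMap ℝ ℂ x from rfl, aeval_algebraMap_apply]
  simp

lemma CDKernel_eq_sum_sq (p : ℕ → Polynomial ℝ) (n : ℕ) (x : ℝ) :
    CDKernel p n x x = ∑ j ∈ Finset.range (n + 1), (eval x (p j)) ^ 2 := by
  simp only [CDKernel, sq]

lemma CDKernel_nonneg (p : ℕ → Polynomial ℝ) (n : ℕ) (x : ℝ) : 0 ≤ CDKernel p n x x := by
  rw [CDKernel_eq_sum_sq]; exact Finset.sum_nonneg fun j _ => sq_nonneg _

lemma cond3_ball_bound (p : ℕ → Polynomial ℝ) (x₀ C₁ R : ℝ) (N n : ℕ)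
    (h3 : ∀ n : ℕ, N < n → ∀ z : ℂ, ‖z‖ < R →
      (1 / (n + 1) : ℝ) * ∑ j ∈ Finset.range (n + 1), ‖(aeval ((x₀ : ℂ) + z / n)) (p j)‖ ^ 2
        ≤ C₁ * Real.exp (‖z‖ ^ 2))
    (hn : N < n) (ζ : ℂ) (hζ : ‖ζ - (x₀ : ℂ)‖ < R / n) :
    ∑ j ∈ Finset.range (n + 1), ‖(aeval ζ) (p j)‖ ^ 2 ≤ (n + 1) * (C₁ * Real.exp (R ^ 2)) := by
  have hn0 : 0 < n := Nat.lt_of_le_of_lt (Nat.zero_le N) hn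
  have hn0' : (0 : ℝ) < n := by exact_mod_cast hn0
  have hR0 : 0 < R := by
    by_contra h
    push_neg at h
    have h1 : R / n ≤ 0 := div_nonpos_of_nonpos_of_nonneg h hn0'.le
    exact absurd (hζ.trans_le h1) (not_lt.mpr (norm_nonneg _))
  set z : ℂ := (n : ℂ) * (ζ - (x₀ : ℂ)) with hz
  have hzn : ‖z‖ = (n : ℝ) * ‖ζ - (x₀ : ℂ)‖ := by
    rw [hz, norm_mul, Complex.norm_natCast]
  have hzR : ‖z‖ < R := by
    rw [hzn]
    calc (n : ℝ) * ‖ζ - (x₀ : ℂ)‖ < (n : ℝ) * (R / n) := mul_lt_mul_of_pos_left hζ hn0'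
      _ = R := by field_simp
  have hback : (x₀ : ℂ) + z / n = ζ := by
    have hnC : ((n : ℕ) : ℂ) ≠ 0 := by exact_mod_cast hn0.ne'
    rw [hz]; field_simp; ring
  have key := h3 n hn z hzR
  rw [hback] at key
  set Ssum := ∑ j ∈ Finset.range (n + 1), ‖(aeval ζ) (p j)‖ ^ 2 with hSsum
  have hL0 : 0 ≤ Ssum := Finset.sum_nonneg fun j _ => sq_nonneg _
  have hpos : (0 : ℝ) < (n : ℝ) + 1 := by positivity
  have hfrac : (0 : ℝ) < 1 / ((n : ℝ) + 1) := by positivity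
  have hexp : Real.exp (‖z‖ ^ 2) ≤ Real.exp (R ^ 2) :=
    Real.exp_le_exp.mpr (pow_le_pow_left₀ (norm_nonneg _) hzR.le 2)
  have hC₁0 : 0 ≤ C₁ := by
    have h0 : (0 : ℝ) * Real.exp (‖z‖ ^ 2) ≤ C₁ * Real.exp (‖z‖ ^ 2) := by
      rw [zero_mul]
      exact le_trans (mul_nonneg hfrac.le hL0) key
    exact le_of_mul_le_mul_right h0 (Real.exp_pos _)
  have key2 : (1 / ((n : ℝ) + 1)) * Ssum ≤ C₁ * Real.exp (R ^ 2) :=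
    key.trans (mul_le_mul_of_nonneg_left hexp hC₁0)
  have key3 := mul_le_mul_of_nonneg_left key2 hpos.le
  calc Ssum = ((n : ℝ) + 1) * (1 / ((n : ℝ) + 1) * Ssum) := by field_simp
    _ ≤ ((n : ℝ) + 1) * (C₁ * Real.exp (R ^ 2)) := key3

lemma g_bounds (p : ℕ → Polynomial ℝ) (x₀ C₁ R : ℝ) (N n : ℕ) (hR2 : 2 ≤ R) (hC₁ : 0 ≤ C₁)
    (h3 : ∀ n : ℕ, N < n → ∀ z : ℂ, ‖z‖ < R →
      (1 / (n + 1) : ℝ) * ∑ j ∈ Finset.range (n + 1), ‖(aeval ((x₀ : ℂ) + z / n)) (p j)‖ ^ 2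
        ≤ C₁ * Real.exp (‖z‖ ^ 2))
    (hn : N < n) :
    (∀ x : ℝ, |x - x₀| ≤ (R - 2) / n →
        CDKernel p n x x ≤ (n + 1) * (C₁ * Real.exp (R ^ 2))) ∧
    (∀ u v : ℝ, |u - x₀| ≤ (R - 2) / n → |v - x₀| ≤ (R - 2) / n →
        |(1 / (n + 1) : ℝ) * CDKernel p n u u - (1 / (n + 1) : ℝ) * CDKernel p n v v|
          ≤ (2 * (C₁ * Real.exp (R ^ 2)) * n) * |u - v|) := by
  have hn0 : 0 < n := Nat.lt_of_le_of_lt (Nat.zero_le N) hn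
  have hn0' : (0 : ℝ) < n := by exact_mod_cast hn0
  set B' : ℝ := C₁ * Real.exp (R ^ 2) with hB'
  have hB'0 : 0 ≤ B' := mul_nonneg hC₁ (Real.exp_pos _).le
  -- part 1
  have part1 : ∀ x : ℝ, |x - x₀| ≤ (R - 2) / n → CDKernel p n x x ≤ (n + 1) * B' := by
    intro x hx
    have hζ : ‖((x : ℂ)) - (x₀ : ℂ)‖ < R / n := by
      have : ((x : ℂ)) - (x₀ : ℂ) = ((x - x₀ : ℝ) : ℂ) := by push_cast; ring
      rw [this, Complex.norm_real, Real.norm_eq_abs]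
      calc |x - x₀| ≤ (R - 2) / n := hx
        _ < R / n := (div_lt_div_iff_of_pos_right hn0').mpr (by linarith)
    have h := cond3_ball_bound p x₀ C₁ R N n h3 hn (x : ℂ) hζ
    have heq : ∑ j ∈ Finset.range (n + 1), ‖(aeval ((x : ℝ) : ℂ)) (p j)‖ ^ 2
        = CDKernel p n x x := by
      rw [CDKernel_eq_sum_sq]
      exact Finset.sum_congr rfl fun j _ => by rw [aeval_real_norm, sq_abs]
    rwa [heq] at h
  refine ⟨part1, ?_⟩
  -- derivative bound on the interval
  set s : Set ℝ := Metric.closedBall x₀ ((R - 2) / n) with hs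
  have hmem : ∀ x : ℝ, x ∈ s ↔ |x - x₀| ≤ (R - 2) / n := by
    intro x; rw [hs, Metric.mem_closedBall, Real.dist_eq]
  set D : ℝ → ℝ := fun x => (1 / (n + 1) : ℝ) *
      ∑ j ∈ Finset.range (n + 1),
        (eval x (derivative (p j)) * eval x (p j) + eval x (p j) * eval x (derivative (p j)))
    with hD
  have hderiv : ∀ x : ℝ, HasDerivAt (fun y => (1 / (n + 1) : ℝ) * CDKernel p n y y) (D x) x := by
    intro x
    have h1 : HasDerivAt (fun y => CDKernel p n y y)
        (∑ j ∈ Finset.range (n + 1),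
          (eval x (derivative (p j)) * eval x (p j) + eval x (p j) * eval x (derivative (p j))))
        x := by
      simp only [CDKernel]
      exact HasDerivAt.fun_sum fun j _ => ((p j).hasDerivAt x).mul ((p j).hasDerivAt x)
    exact h1.const_mul _
  have hDbound : ∀ x ∈ s, ‖D x‖ ≤ 2 * B' * n := by
    intro x hxs
    have hx := (hmem x).mp hxs
    -- bound on Σ e²
    have hE : ∑ j ∈ Finset.range (n + 1), (eval x (p j)) ^ 2 ≤ (n + 1) * B' := by
      rw [← CDKernel_eq_sum_sq]; exact part1 x hx
    -- bound on Σ e'²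
    have hE' : ∑ j ∈ Finset.range (n + 1), (eval x (derivative (p j))) ^ 2
        ≤ (n + 1) * B' * n ^ 2 := by
      have hsphere : ∀ z : ℂ, z ∈ Metric.sphere (x : ℂ) (1 / n) →
          ∑ j ∈ Finset.range (n + 1), ‖(aeval z) (p j)‖ ^ 2 ≤ (n + 1) * B' := by
        intro z hz
        apply cond3_ball_bound p x₀ C₁ R N n h3 hn
        have h1 : ‖z - (x : ℂ)‖ = 1 / n := by
          rw [Metric.mem_sphere] at hz; rw [← hz]; rw [dist_eq_norm]
        have h2 : ‖(x : ℂ) - (x₀ : ℂ)‖ ≤ (R - 2) / n := by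
          have : ((x : ℂ)) - (x₀ : ℂ) = ((x - x₀ : ℝ) : ℂ) := by push_cast; ring
          rw [this, Complex.norm_real, Real.norm_eq_abs]; exact hx
        calc ‖z - (x₀ : ℂ)‖ ≤ ‖z - (x : ℂ)‖ + ‖(x : ℂ) - (x₀ : ℂ)‖ := by
              simpa using norm_sub_le_norm_sub_add_norm_sub z (x : ℂ) (x₀ : ℂ)
          _ ≤ 1 / n + (R - 2) / n := by rw [h1]; exact add_le_add_right h2 _
          _ = (R - 1) / n := by ring
          _ < R / n := (div_lt_div_iff_of_pos_right hn0').mpr (by linarith)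
      have h := sum_deriv_sq_bound p n x (1 / n) ((n + 1) * B')
        (by positivity) (by positivity) hsphere
      calc ∑ j ∈ Finset.range (n + 1), (eval x (derivative (p j))) ^ 2
          ≤ ((n + 1) * B') / (1 / n : ℝ) ^ 2 := h
        _ = (n + 1) * B' * n ^ 2 := by
            rw [div_eq_iff (by positivity : ((1:ℝ)/n)^2 ≠ 0)]
            field_simp
    set T : ℝ := ∑ j ∈ Finset.range (n + 1), eval x (p j) * eval x (derivative (p j)) with hT
    have hsum : ∑ j ∈ Finset.range (n + 1),
        (eval x (derivative (p j)) * eval x (p j) + eval x (p j) * eval x (derivative (p j)))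
        = 2 * T := by
      rw [hT, Finset.mul_sum]
      exact Finset.sum_congr rfl fun j _ => by ring
    have hEnn : (0:ℝ) ≤ ∑ j ∈ Finset.range (n + 1), eval x (derivative (p j)) ^ 2 :=
      Finset.sum_nonneg fun j _ => sq_nonneg _
    have hb0 : (0:ℝ) ≤ ((n:ℝ) + 1) * B' := by positivity
    have hT2 : T ^ 2 ≤ (((n:ℝ) + 1) * B' * n) ^ 2 := by
      have hcs := Finset.sum_mul_sq_le_sq_mul_sq (Finset.range (n + 1))
        (fun j => eval x (p j)) (fun j => eval x (derivative (p j)))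
      calc T ^ 2 ≤ (∑ j ∈ Finset.range (n + 1), eval x (p j) ^ 2) *
            (∑ j ∈ Finset.range (n + 1), eval x (derivative (p j)) ^ 2) := hcs
        _ ≤ (((n:ℝ) + 1) * B') * (((n:ℝ) + 1) * B' * (n:ℝ) ^ 2) := mul_le_mul hE hE' hEnn hb0
        _ = (((n:ℝ) + 1) * B' * n) ^ 2 := by ring
    have hK0 : (0:ℝ) ≤ ((n:ℝ) + 1) * B' * n := by positivity
    have hTabs : |T| ≤ ((n:ℝ) + 1) * B' * n := by nlinarith [sq_abs T, abs_nonneg T]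
    have hDx : D x = (1 / ((n:ℝ) + 1)) * (2 * T) := by rw [hD]; simp only; rw [hsum]
    rw [Real.norm_eq_abs, hDx, abs_mul, abs_mul]
    have h1 : |1 / ((n:ℝ) + 1)| = 1 / ((n:ℝ) + 1) := abs_of_pos (by positivity)
    have h2 : |(2:ℝ)| = 2 := by norm_num
    rw [h1, h2]
    have hfin : (1 / ((n:ℝ) + 1)) * (2 * (((n:ℝ) + 1) * B' * n)) = 2 * B' * n := by
      field_simp
    calc (1 / ((n:ℝ) + 1)) * (2 * |T|) ≤ (1 / ((n:ℝ) + 1)) * (2 * (((n:ℝ) + 1) * B' * n)) := by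
          apply mul_le_mul_of_nonneg_left _ (by positivity)
          exact mul_le_mul_of_nonneg_left hTabs (by norm_num)
      _ = 2 * B' * n := hfin
  intro u v hu hv
  have hres := (convex_closedBall x₀ ((R - 2) / (n:ℝ))).norm_image_sub_le_of_norm_hasDerivWithin_le
    (f' := D) (fun y _ => (hderiv y).hasDerivWithinAt) hDbound ((hmem v).mpr hv) ((hmem u).mpr hu)
  simpa [Real.norm_eq_abs] using hres

lemma density_gap (E : Set ℝ) (x₀ d ρ c : ℝ) (hd : 0 < d)
    (hlow : ENNReal.ofReal (2 * ρ - d) < volume (E ∩ Metric.closedBall x₀ ρ))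
    (hc : |c - x₀| + d ≤ ρ) :
    ∃ y ∈ E, |y - c| ≤ d := by
  by_contra h
  push_neg at h
  have hρd : d ≤ ρ := le_trans (by linarith [abs_nonneg (c - x₀)]) hc
  have hρ0 : 0 < ρ := lt_of_lt_of_le hd hρd
  -- the ball around c is disjoint from E ∩ closedBall
  have hdisj : Disjoint (E ∩ Metric.closedBall x₀ ρ) (Metric.ball c d) := by
    rw [Set.disjoint_left]
    intro y hy hyb
    rw [Metric.mem_ball, Real.dist_eq] at hyb
    exact absurd hyb (not_lt.mpr (h y hy.1).le)
  have hsub : (E ∩ Metric.closedBall x₀ ρ) ∪ Metric.ball c d ⊆ Metric.closedBall x₀ ρ := by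
    apply Set.union_subset inter_subset_right
    intro y hy
    rw [Metric.mem_ball, Real.dist_eq] at hy
    rw [Metric.mem_closedBall, Real.dist_eq]
    calc |y - x₀| ≤ |y - c| + |c - x₀| := abs_sub_le _ _ _
      _ ≤ d + |c - x₀| := by linarith [hy.le]
      _ ≤ ρ := by linarith
  have hadd : volume (E ∩ Metric.closedBall x₀ ρ) + volume (Metric.ball c d)
      ≤ ENNReal.ofReal (2 * ρ) := by
    rw [← measure_union hdisj measurableSet_ball, ← Real.volume_closedBall x₀ ρ]
    exact measure_mono hsub
  rw [Real.volume_ball] at hadd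
  -- pass to real numbers
  have hfin : volume (E ∩ Metric.closedBall x₀ ρ) ≠ ⊤ := by
    intro htop
    rw [htop] at hadd
    simp at hadd
    exact ENNReal.mul_ne_top (by simp) ENNReal.ofReal_ne_top hadd
  set V : ℝ := (volume (E ∩ Metric.closedBall x₀ ρ)).toReal with hV
  have h1 : 2 * ρ - d < V := by
    rw [← ENNReal.ofReal_lt_iff_lt_toReal (by linarith) hfin] at *
    exact hlow
  have h2 : V + 2 * d ≤ 2 * ρ := by
    have := ENNReal.toReal_mono ENNReal.ofReal_ne_top hadd
    rw [ENNReal.toReal_add hfin ENNReal.ofReal_ne_top, ENNReal.toReal_ofReal (by linarith),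
      ENNReal.toReal_ofReal (by linarith)] at this
    linarith [this]
  linarith

end Aux

set_option maxHeartbeats 2000000 in
/-- **Theorem 2** of Avila–Last–Simon.  Let `μ` be a probability measure on `ℝ` with compact,
infinite support, `p_n` its orthonormal polynomials, `K_n` the CD kernel, `w = dμ/dx`, and let
`Σ ⊆ {w > 0}` be measurable.  Suppose for Lebesgue-a.e. `x₀ ∈ Σ`: condition (3) holds at `x₀`
(for every `ε > 0` there is `C_ε > 0` so that for every `R` there is `N` with
`(1/(n+1)) K_n(x₀ + z/n, x₀ + z/n) ≤ C_ε exp(ε|z|²)` for `n > N`, `|z| < R`), and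
`lim (1/(n+1)) K_n(x₀, x₀)` exists, is strictly positive and finite.  Then for a.e. `x₀ ∈ Σ`
the Lubinsky wiggle condition holds: `K_n(x₀ + a/n, x₀ + a/n)/K_n(x₀, x₀) → 1` uniformly for
`a ∈ [-A, A]`, for every `A < ∞`. -/
theorem stmt_1
    (μ : Measure ℝ) [IsProbabilityMeasure μ]
    (hsupp_cpt : IsCompact (measSupport μ)) (hsupp_inf : (measSupport μ).Infinite)
    (p : ℕ → Polynomial ℝ)
    (hdeg : ∀ n : ℕ, (p n).natDegree = n)
    (hlead : ∀ n : ℕ, 0 < (p n).leadingCoeff)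
    (horth : ∀ n m : ℕ, (∫ x, (p n).eval x * (p m).eval x ∂μ) = if n = m then 1 else 0)
    (w : ℝ → ℝ) (hw : w = fun x => (μ.rnDeriv volume x).toReal)
    (Sig : Set ℝ) (hSigMeas : MeasurableSet Sig) (hSigSub : Sig ⊆ {x : ℝ | 0 < w x})
    (hae : ∀ᵐ (x₀ : ℝ) ∂(volume.restrict Sig),
      (∀ ε : ℝ, 0 < ε → ∃ Cε : ℝ, 0 < Cε ∧ ∀ R : ℝ, ∃ N : ℕ,
        ∀ n : ℕ, N < n → ∀ z : ℂ, ‖z‖ < R →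
          (1 / (n + 1) : ℝ) *
              ∑ j ∈ Finset.range (n + 1), ‖Polynomial.aeval ((x₀ : ℂ) + z / n) (p j)‖ ^ 2 ≤
            Cε * Real.exp (ε * ‖z‖ ^ 2)) ∧
      (∃ k : ℝ, 0 < k ∧
        Tendsto (fun n : ℕ => (1 / (n + 1) : ℝ) * CDKernel p n x₀ x₀) atTop (nhds k))) :
    ∀ᵐ (x₀ : ℝ) ∂(volume.restrict Sig),
      ∀ A : ℝ, 0 < A →
        TendstoUniformlyOn
          (fun (n : ℕ) (a : ℝ) => CDKernel p n (x₀ + a / n) (x₀ + a / n) / CDKernel p n x₀ x₀)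
          (fun _ => 1) atTop (Icc (-A) A) := by
  classical
  set g : ℕ → ℝ → ℝ := fun n x => (1 / (n + 1) : ℝ) * CDKernel p n x x with hg
  have hgcont : ∀ n, Continuous (g n) := by
    intro n
    apply continuous_const.mul
    unfold CDKernel
    exact continuous_finset_sum _ fun j _ =>
      (p j).continuous.mul (p j).continuous
  have hgmeas : ∀ n, Measurable (g n) := fun n => (hgcont n).measurable
  set k : ℝ → ℝ := fun x => limsup (fun n => g n x) atTop with hk
  have hkmeas : Measurable k := Measurable.limsup hgmeas
  have hae' := (ae_restrict_iff' hSigMeas).mp hae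
  -- pointwise convergence to k on Sig (a.e.)
  have hconv : ∀ᵐ x ∂(volume : Measure ℝ), x ∈ Sig →
      (Tendsto (fun n => g n x) atTop (nhds (k x)) ∧ 0 < k x) := by
    filter_upwards [hae'] with x hx hxSig
    obtain ⟨h3, c, hc, hten⟩ := hx hxSig
    have hkx : k x = c := hten.limsup_eq
    rw [hkx]
    exact ⟨hten, hc⟩
  -- Egorov sets
  have hEg : ∀ M m : ℕ, ∃ S : Set ℝ, MeasurableSet S ∧ S ⊆ Sig ∩ Ioo (-(M:ℝ)) M ∧
      volume ((Sig ∩ Ioo (-(M:ℝ)) M) \ S) ≤ ENNReal.ofReal (1 / (m + 1)) ∧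
      TendstoUniformlyOn g k atTop S := by
    intro M m
    have hsM : MeasurableSet (Sig ∩ Ioo (-(M:ℝ)) M) := hSigMeas.inter measurableSet_Ioo
    have hfin : volume (Sig ∩ Ioo (-(M:ℝ)) M) ≠ ⊤ :=
      ((measure_mono inter_subset_right).trans_lt measure_Ioo_lt_top).ne
    obtain ⟨t, hts, htm, htμ, hunif⟩ := tendstoUniformlyOn_of_ae_tendsto
      (fun n => (hgcont n).stronglyMeasurable) hkmeas.stronglyMeasurable hsM hfin
      (hconv.mono fun x hx hxs => (hx hxs.1).1)
      (show (0:ℝ) < 1 / (m + 1) by positivity)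
    refine ⟨(Sig ∩ Ioo (-(M:ℝ)) M) \ t, hsM.diff htm, diff_subset, ?_, hunif⟩
    refine le_trans (measure_mono ?_) htμ
    intro x hx
    by_contra hxt
    exact hx.2 ⟨hx.1, hxt⟩
  choose SS hSSmeas hSSsub hSSvol hSSunif using hEg
  -- a.e. coverage by Egorov sets
  have hcov : ∀ᵐ x ∂(volume : Measure ℝ), ∀ M : ℕ,
      x ∈ Sig ∩ Ioo (-(M:ℝ)) M → x ∈ ⋃ m, SS M m := by
    rw [ae_all_iff]
    intro M
    have hnull : volume ((Sig ∩ Ioo (-(M:ℝ)) M) \ ⋃ m, SS M m) = 0 := by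
      refine le_antisymm ?_ (zero_le)
      refine ENNReal.le_of_forall_pos_le_add fun ε hε _ => ?_
      obtain ⟨m, hm⟩ := exists_nat_one_div_lt (show (0:ℝ) < ε by exact_mod_cast hε)
      calc volume ((Sig ∩ Ioo (-(M:ℝ)) M) \ ⋃ m, SS M m)
          ≤ volume ((Sig ∩ Ioo (-(M:ℝ)) M) \ SS M m) :=
            measure_mono (diff_subset_diff_right (subset_iUnion _ m))
        _ ≤ ENNReal.ofReal (1 / (m + 1)) := hSSvol M m
        _ ≤ 0 + (ε : ℝ≥0∞) := by
            rw [zero_add, ← ENNReal.ofReal_coe_nnreal]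
            exact ENNReal.ofReal_le_ofReal hm.le
    rw [ae_iff]
    refine measure_mono_null ?_ hnull
    intro x hx
    rw [mem_setOf_eq, Classical.not_imp] at hx
    exact ⟨hx.1, hx.2⟩
  -- density points of the sets E M m q r
  have hdens : ∀ᵐ x ∂(volume : Measure ℝ), ∀ M m : ℕ, ∀ q r : ℚ,
      x ∈ SS M m ∩ k ⁻¹' (Ioo (q:ℝ) r) →
      Tendsto (fun ρ => volume ((SS M m ∩ k ⁻¹' (Ioo (q:ℝ) r)) ∩ Metric.closedBall x ρ) /
        volume (Metric.closedBall x ρ)) (nhdsWithin 0 (Ioi 0)) (nhds 1) := by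
    rw [ae_all_iff]; intro M
    rw [ae_all_iff]; intro m
    rw [ae_all_iff]; intro q
    rw [ae_all_iff]; intro r
    have hEmeas : MeasurableSet (SS M m ∩ k ⁻¹' (Ioo (q:ℝ) r)) :=
      (hSSmeas M m).inter (hkmeas measurableSet_Ioo)
    filter_upwards [Besicovitch.ae_tendsto_measure_inter_div_of_measurableSet
      (volume : Measure ℝ) hEmeas] with x hx hxE
    have heq : (SS M m ∩ k ⁻¹' (Ioo (q:ℝ) r)).indicator (1 : ℝ → ℝ≥0∞) x = 1 :=
      indicator_of_mem hxE 1
    rw [heq] at hx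
    exact hx
  -- main pointwise argument
  rw [ae_restrict_iff' hSigMeas]
  filter_upwards [hae', hconv, hcov, hdens] with x₀ hx₀ hconv₀ hcov₀ hdens₀ hx₀Sig
  obtain ⟨h3full, c₀, hc₀, htend⟩ := hx₀ hx₀Sig
  have hkx : k x₀ = c₀ := htend.limsup_eq
  have hkpos : 0 < k x₀ := hkx ▸ hc₀
  have htendk : Tendsto (fun n => g n x₀) atTop (nhds (k x₀)) := by rw [hkx]; exact htend
  obtain ⟨M, hM⟩ := exists_nat_gt |x₀|
  have hx₀M : x₀ ∈ Sig ∩ Ioo (-(M:ℝ)) M := by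
    refine ⟨hx₀Sig, ?_, ?_⟩
    · have := abs_lt.mp hM; linarith [this.1]
    · have := abs_lt.mp hM; linarith [this.2]
  obtain ⟨m, hm⟩ := mem_iUnion.mp (hcov₀ M hx₀M)
  intro A hA
  obtain ⟨C₁, hC₁, h3R⟩ := h3full 1 one_pos
  set R : ℝ := A + 3 with hRdef
  have hR2 : 2 ≤ R := by linarith
  obtain ⟨N₁, h3N⟩ := h3R R
  have h3N' : ∀ n : ℕ, N₁ < n → ∀ z : ℂ, ‖z‖ < R →
      (1 / (n + 1) : ℝ) *
        ∑ j ∈ Finset.range (n + 1), ‖Polynomial.aeval ((x₀ : ℂ) + z / n) (p j)‖ ^ 2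
        ≤ C₁ * Real.exp (‖z‖ ^ 2) := by
    intro n hn z hz
    have h := h3N n hn z hz
    rwa [one_mul] at h
  set B' : ℝ := C₁ * Real.exp (R ^ 2) with hB'def
  have hB'pos : 0 < B' := by positivity
  -- uniform convergence of g n (x₀ + a / n) to k x₀ on Icc (-A) A
  have Huni : TendstoUniformlyOn (fun n a => g n (x₀ + a / n)) (fun _ => k x₀) atTop
      (Icc (-A) A) := by
    rw [Metric.tendstoUniformlyOn_iff]
    intro ε hε
    set d : ℝ := min 1 (ε / (4 * (2 * B' + 1))) with hddef
    have hd0 : 0 < d := lt_min one_pos (by positivity)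
    have hd1 : d ≤ 1 := min_le_left _ _
    have hdB : 2 * B' * d < ε / 4 := by
      have h1 : d ≤ ε / (4 * (2 * B' + 1)) := min_le_right _ _
      have h2 : 2 * B' * d ≤ 2 * B' * (ε / (4 * (2 * B' + 1))) :=
        mul_le_mul_of_nonneg_left h1 (by positivity)
      have h3 : 2 * B' * (ε / (4 * (2 * B' + 1))) < ε / 4 := by
        rw [mul_div_assoc', div_lt_div_iff₀ (by positivity) (by norm_num)]
        nlinarith
      linarith
    obtain ⟨q, hq1, hq2⟩ := exists_rat_btwn (show k x₀ - ε / 4 < k x₀ by linarith)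
    obtain ⟨r, hr1, hr2⟩ := exists_rat_btwn (show k x₀ < k x₀ + ε / 4 by linarith)
    have hx₀E : x₀ ∈ SS M m ∩ k ⁻¹' (Ioo (q:ℝ) r) := ⟨hm, hq2, hr1⟩
    have hden := hdens₀ M m q r hx₀E
    set E : Set ℝ := SS M m ∩ k ⁻¹' (Ioo (q:ℝ) r) with hEdef
    set θ : ℝ := d / (2 * (A + d)) with hθdef
    have hθ0 : 0 < θ := by positivity
    have hθ1 : θ < 1 := by
      rw [hθdef, div_lt_one (by positivity)]
      nlinarith
    have hlt : ENNReal.ofReal (1 - θ) < 1 := by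
      rw [← ENNReal.ofReal_one]
      exact ENNReal.ofReal_lt_ofReal_iff one_pos |>.mpr (by linarith)
    have hev := hden.eventually (eventually_gt_nhds hlt)
    obtain ⟨ρ₀, hρ₀pos, hρ₀⟩ := mem_nhdsGT_iff_exists_Ioc_subset.mp hev
    rw [mem_Ioi] at hρ₀pos
    have hn3 : ∀ᶠ n : ℕ in atTop, (A + d) / (n : ℝ) ≤ ρ₀ := by
      have ht := tendsto_const_div_atTop_nhds_zero_nat (A + d)
      exact ht.eventually (eventually_le_nhds hρ₀pos)
    have hn4 := Metric.tendstoUniformlyOn_iff.mp (hSSunif M m) (ε / 4) (by positivity)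
    filter_upwards [eventually_gt_atTop N₁, eventually_ge_atTop 1, hn3, hn4]
      with n hn1 hn2 hn3' hn4'
    intro a ha
    have hnpos : (0:ℝ) < n := by exact_mod_cast hn2
    have haA : |a| ≤ A := abs_le.mpr ⟨ha.1, ha.2⟩
    set x : ℝ := x₀ + a / n with hxdef
    have hxx₀ : |x - x₀| ≤ A / n := by
      rw [hxdef, add_sub_cancel_left, abs_div, abs_of_pos hnpos]
      gcongr
    have hR2n : (R - 2) / (n : ℝ) = (A + 1) / n := by rw [hRdef]; ring_nf
    have hxI : |x - x₀| ≤ (R - 2) / n := by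
      rw [hR2n]
      refine hxx₀.trans ?_
      gcongr
      linarith
    -- density gap: find y ∈ E near x
    set ρ : ℝ := (A + d) / n with hρdef
    have hρpos : 0 < ρ := by positivity
    have hmemρ := hρ₀ ⟨hρpos, hn3'⟩
    rw [mem_setOf_eq] at hmemρ
    have hbne : volume (Metric.closedBall x₀ ρ) ≠ 0 := by
      rw [Real.volume_closedBall]
      exact (ENNReal.ofReal_pos.mpr (by linarith)).ne'
    have hbnt : volume (Metric.closedBall x₀ ρ) ≠ ⊤ := by
      rw [Real.volume_closedBall]; exact ENNReal.ofReal_ne_top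
    have hlow : ENNReal.ofReal (2 * ρ - d / n) < volume (E ∩ Metric.closedBall x₀ ρ) := by
      have h1 := (ENNReal.lt_div_iff_mul_lt (Or.inl hbne) (Or.inl hbnt)).mp hmemρ
      have h2 : ENNReal.ofReal (1 - θ) * volume (Metric.closedBall x₀ ρ)
          = ENNReal.ofReal (2 * ρ - d / n) := by
        rw [Real.volume_closedBall, ← ENNReal.ofReal_mul (by linarith)]
        congr 1
        rw [hθdef, hρdef]
        field_simp
      rwa [h2] at h1
    obtain ⟨y, hyE, hyx⟩ := density_gap E x₀ (d / n) ρ x (by positivity) hlow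
      (by have hsplit : (A + d) / (n:ℝ) = A / n + d / n := by ring
          rw [hρdef, hsplit]
          linarith [hxx₀])
    have hyI : |y - x₀| ≤ (R - 2) / n := by
      rw [hR2n]
      calc |y - x₀| ≤ |y - x| + |x - x₀| := abs_sub_le _ _ _
        _ ≤ d / n + A / n := add_le_add hyx hxx₀
        _ = (A + d) / n := by ring
        _ ≤ (A + 1) / n := by
            gcongr
    -- Lipschitz estimate
    have hlip := (g_bounds p x₀ C₁ R N₁ n hR2 hC₁.le h3N' hn1).2 x y hxI hyI
    have hgxy : |g n x - g n y| ≤ 2 * B' * n * |x - y| := hlip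
    have habs_xy : |x - y| ≤ d / n := by rw [abs_sub_comm]; exact hyx
    have hbound1 : |g n x - g n y| < ε / 4 := by
      calc |g n x - g n y| ≤ 2 * B' * n * |x - y| := hgxy
        _ ≤ 2 * B' * n * (d / n) :=
            mul_le_mul_of_nonneg_left habs_xy (by positivity)
        _ = 2 * B' * d := by field_simp
        _ < ε / 4 := hdB
    have hbound2 : dist (k y) (g n y) < ε / 4 := hn4' y hyE.1
    rw [Real.dist_eq] at hbound2
    have hky : (q:ℝ) < k y ∧ k y < r := hyE.2
    have hbound3 : |k y - k x₀| < ε / 2 := by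
      rw [abs_lt]
      exact ⟨by linarith [hky.1, hky.2], by linarith [hky.1, hky.2]⟩
    rw [Real.dist_eq]
    have t1 : |k x₀ - g n x| ≤ |k x₀ - k y| + |k y - g n y| + |g n y - g n x| := by
      calc |k x₀ - g n x| ≤ |k x₀ - k y| + |k y - g n x| := abs_sub_le _ _ _
        _ ≤ |k x₀ - k y| + (|k y - g n y| + |g n y - g n x|) :=
            add_le_add_right (abs_sub_le _ _ _) _
        _ = _ := by ring
    have t2 : |k x₀ - k y| = |k y - k x₀| := abs_sub_comm _ _
    have t3 : |g n y - g n x| = |g n x - g n y| := abs_sub_comm _ _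
    rw [t2, t3] at t1
    linarith
  -- conclude: the ratio converges uniformly to 1
  rw [Metric.tendstoUniformlyOn_iff]
  intro ε hε
  have hε' : (0:ℝ) < ε * k x₀ / 8 := by positivity
  have hev1 := Metric.tendstoUniformlyOn_iff.mp Huni (ε * k x₀ / 8) hε'
  have hev2 : ∀ᶠ n : ℕ in atTop, |g n x₀ - k x₀| < min (k x₀ / 2) (ε * k x₀ / 8) := by
    have h := Metric.tendsto_nhds.mp htendk (min (k x₀ / 2) (ε * k x₀ / 8))
      (lt_min (by positivity) hε')
    filter_upwards [h] with n hn
    rwa [Real.dist_eq] at hn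
  filter_upwards [hev1, hev2, eventually_ge_atTop 1] with n h1 h2 hn1
  intro a ha
  have hnpos : (0:ℝ) < n := by exact_mod_cast hn1
  have hgn0 : k x₀ / 2 < g n x₀ := by
    have := (abs_lt.mp (h2.trans_le (min_le_left _ _))).1
    linarith
  have hgn0pos : 0 < g n x₀ := lt_trans (by positivity) hgn0
  have hcne : (1 / ((n:ℝ) + 1)) ≠ 0 := by positivity
  have hratio : CDKernel p n (x₀ + a / n) (x₀ + a / n) / CDKernel p n x₀ x₀
      = g n (x₀ + a / n) / g n x₀ := by
    rw [hg]
    simp only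
    rw [mul_div_mul_left _ _ hcne]
  rw [Real.dist_eq, hratio]
  have hgx := h1 a ha
  rw [Real.dist_eq] at hgx
  -- |1 - gx/gn0| = |gx - gn0| / gn0 < ε
  have hkey : |g n (x₀ + a / n) - g n x₀| < ε * k x₀ / 4 := by
    have e1 : |g n (x₀ + a / n) - k x₀| < ε * k x₀ / 8 := by
      rw [abs_sub_comm]; exact hgx
    have e2 : |g n x₀ - k x₀| < ε * k x₀ / 8 := h2.trans_le (min_le_right _ _)
    calc |g n (x₀ + a / n) - g n x₀|
        ≤ |g n (x₀ + a / n) - k x₀| + |k x₀ - g n x₀| := abs_sub_le _ _ _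
      _ < ε * k x₀ / 8 + ε * k x₀ / 8 := by
          rw [abs_sub_comm (k x₀)]
          exact add_lt_add e1 e2
      _ = ε * k x₀ / 4 := by ring
  have heq : (1 : ℝ) - g n (x₀ + a / n) / g n x₀ = (g n x₀ - g n (x₀ + a / n)) / g n x₀ := by
    field_simp
  rw [heq, abs_div, abs_of_pos hgn0pos, div_lt_iff₀ hgn0pos]
  have : |g n x₀ - g n (x₀ + a / n)| = |g n (x₀ + a / n) - g n x₀| := abs_sub_comm _ _
  rw [this]
  nlinarith
end

section
/- (Proposition 2.2(b)) Let f : ℝ → ℝ be continuous with ∫_ℝ f(x)² dx ≤ 1 and f(0) = 1, and suppose its Fourier transform (as an L² function, with the convention f̂(k) = (2π)^{−1/2} ∫ f(x) e^{−ikx} dx) vanishes a.e. outside [−π, π]. Then f(x) = sin(πx)/(πx) for all x ∈ ℝ (with value 1 at x = 0). -/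
open MeasureTheory

open Set AddCircle Complex
open scoped Real ENNReal

noncomputable section


namespace Stmt5Aux

local instance fact2pi : Fact (0 < 2 * π) := ⟨by positivity⟩

/-- MemLp of liftIoc. -/
lemma memLp_liftIoc (h : ℝ → ℂ) (hm : Measurable h)
    (h2 : MemLp h 2 (volume : Measure ℝ)) :
    MemLp (AddCircle.liftIoc (2*π) (-π) h) 2 (volume : Measure (AddCircle (2*π))) := by
  set H := AddCircle.liftIoc (2*π) (-π) h with hH
  have hHm : Measurable H := by
    apply hm.comp
    exact measurable_subtype_coe.comp (AddCircle.measurableEquivIoc (2*π) (-π)).measurable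
  rw [← (AddCircle.measurePreserving_mk (2*π) (-π)).map_eq,
    memLp_map_measure_iff hHm.stronglyMeasurable.aestronglyMeasurable
      AddCircle.measurable_mk'.aemeasurable]
  have : (H ∘ (QuotientAddGroup.mk : ℝ → AddCircle (2*π)))
      =ᵐ[volume.restrict (Ioc (-π) (-π + 2*π))] h := by
    filter_upwards [ae_restrict_mem measurableSet_Ioc] with x hx
    exact AddCircle.liftIoc_coe_apply hx
  exact (MemLp.restrict _ h2).ae_eq this.symm

/-- Parseval for a function on `ℝ` supported in `(-π, π]`, via the circle of circumference 2π. -/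
lemma parseval_aux (h : ℝ → ℂ) (hm : Measurable h) (h2 : MemLp h 2 (volume : Measure ℝ)) :
    HasSum (fun n : ℤ => ‖fourierCoeff (AddCircle.liftIoc (2*π) (-π) h) n‖ ^ 2)
      ((2*π)⁻¹ * ∫ k in Ioc (-π) (-π + 2*π), ‖h k‖ ^ 2) := by
  set H := AddCircle.liftIoc (2*π) (-π) h with hHdef
  have hHL2 := memLp_liftIoc h hm h2
  have hmeas : haarAddCircle = (ENNReal.ofReal (2*π))⁻¹ • (volume : Measure (AddCircle (2*π))) := by
    rw [volume_eq_smul_haarAddCircle, smul_smul, ENNReal.inv_mul_cancel, one_smul]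
    · simp [Real.pi_pos]
    · exact ENNReal.ofReal_ne_top
  have hhaar : MemLp H 2 haarAddCircle := by
    rw [hmeas]; exact hHL2.smul_measure (by simp [Real.pi_pos])
  set F := hhaar.toLp H with hF
  have hcoeff : ∀ n : ℤ, fourierCoeff (⇑F) n = fourierCoeff H n := fun n =>
    integral_congr_ae (by filter_upwards [hhaar.coeFn_toLp] with x hx; rw [hx])
  have hsumm : Summable fun n : ℤ => ‖fourierCoeff (⇑F) n‖ ^ 2 := by
    have := lp.memℓp (fourierBasis.repr F)
    rw [memℓp_gen_iff (by norm_num : (0:ℝ) < (2 : ℝ≥0∞).toReal)] at this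
    simpa [fourierBasis_repr] using this
  have hts := tsum_sq_fourierCoeff F
  have hRHS : (∫ t : AddCircle (2*π), ‖F t‖ ^ 2 ∂haarAddCircle)
      = (2*π)⁻¹ * ∫ k in Ioc (-π) (-π + 2*π), ‖h k‖ ^ 2 := by
    have e1 : (∫ t : AddCircle (2*π), ‖F t‖ ^ 2 ∂haarAddCircle)
        = ∫ t : AddCircle (2*π), ‖H t‖ ^ 2 ∂haarAddCircle :=
      integral_congr_ae (by filter_upwards [hhaar.coeFn_toLp] with x hx; rw [hx])
    have e2 : (∫ t : AddCircle (2*π), ‖H t‖ ^ 2 ∂haarAddCircle)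
        = (2*π)⁻¹ * ∫ t : AddCircle (2*π), ‖H t‖ ^ 2 := by
      rw [hmeas, integral_smul_measure]
      simp [ENNReal.toReal_inv, ENNReal.toReal_ofReal (by positivity : (0:ℝ) ≤ 2*π), Real.pi_pos.le]
    have e3 : (∫ t : AddCircle (2*π), ‖H t‖ ^ 2)
        = ∫ k in Ioc (-π) (-π + 2*π), ‖h k‖ ^ 2 := by
      rw [← AddCircle.integral_preimage (2*π) (-π) (fun t => ‖H t‖ ^ 2)]
      refine setIntegral_congr_fun measurableSet_Ioc fun x hx => ?_
      rw [hHdef, AddCircle.liftIoc_coe_apply hx]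
    rw [e1, e2, e3]
  have hfinal := hsumm.hasSum
  rw [hts, hRHS] at hfinal
  simp only [hcoeff] at hfinal
  exact hfinal

/-- Fourier coefficient of the lift, for `h` integrable and supported in `(-π, π]`. -/
lemma coeff_eq (h : ℝ → ℂ) (hsupp : ∀ k ∉ Ioc (-π) π, h k = 0) (hi : Integrable h) (n : ℤ) :
    fourierCoeff (AddCircle.liftIoc (2*π) (-π) h) n
      = (1/(2*π)) * ∫ k : ℝ, h k * Complex.exp (-(Complex.I * n * k)) := by
  rw [fourierCoeff_eq_intervalIntegral _ n (-π)]
  rw [intervalIntegral.integral_of_le (by linarith [Real.pi_pos] : -π ≤ -π + 2*π)]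
  have e1 : (∫ x in Ioc (-π) (-π + 2*π),
        fourier (-n) (x : AddCircle (2*π)) • AddCircle.liftIoc (2*π) (-π) h x)
      = ∫ x in Ioc (-π) (-π + 2*π), h x * Complex.exp (-(Complex.I * n * x)) := by
    refine setIntegral_congr_fun measurableSet_Ioc fun x hx => ?_
    rw [AddCircle.liftIoc_coe_apply hx, fourier_coe_apply, smul_eq_mul, mul_comm]
    congr 1
    congr 1
    have hπ : (π : ℂ) ≠ 0 := by
      simpa using Real.pi_ne_zero
    push_cast
    field_simp
  rw [e1]
  have e2 : (∫ x in Ioc (-π) (-π + 2*π), h x * Complex.exp (-(Complex.I * n * x)))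
      = ∫ k : ℝ, h k * Complex.exp (-(Complex.I * n * k)) := by
    rw [show -π + 2*π = π by ring]
    exact setIntegral_eq_integral_of_forall_compl_eq_zero fun x hx => by rw [hsupp x hx, zero_mul]
  rw [e2, Complex.real_smul]
  norm_num

/-- translation of a set lintegral. -/
lemma lint_translate (F : ℝ → ℝ≥0∞) (n : ℤ) :
    ∫⁻ t in Ioc (0:ℝ) 1, F (t + n) = ∫⁻ x in Ioc ((n:ℝ)) (n+1), F x := by
  have hmp : MeasurePreserving (fun t : ℝ => t + (n:ℝ)) volume volume :=
    measurePreserving_add_right volume _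
  have hemb : MeasurableEmbedding (fun t : ℝ => t + (n:ℝ)) :=
    (Homeomorph.addRight (n:ℝ)).measurableEmbedding
  have hpre : (fun t : ℝ => t + (n:ℝ)) ⁻¹' Ioc ((n:ℝ)) (n+1) = Ioc 0 1 := by
    rw [preimage_add_const_Ioc]; norm_num
  rw [← hpre, hmp.setLIntegral_comp_preimage_emb hemb]

lemma lint_whole (F : ℝ → ℝ≥0∞) (hF : Measurable F) :
    ∫⁻ x, F x = ∑' n : ℤ, ∫⁻ t in Ioc (0:ℝ) 1, F (t + n) := by
  conv_lhs => rw [← Measure.restrict_univ (μ := (volume : Measure ℝ)),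
    ← iUnion_Ioc_intCast (α := ℝ)]
  rw [lintegral_iUnion (fun n => measurableSet_Ioc) (pairwise_disjoint_Ioc_intCast ℝ)]
  exact tsum_congr fun n => (lint_translate F n).symm

end Stmt5Aux

open Stmt5Aux

local instance : Fact (0 < 2 * π) := ⟨by positivity⟩

/-- **Proposition 2.2(b)** of Avila–Last–Simon: let `f : ℝ → ℝ` be continuous with
`∫_ℝ f(x)² dx ≤ 1` and `f(0) = 1`, and suppose its Fourier transform (with the convention
`f̂(k) = (2π)^{-1/2} ∫ f(x) e^{-ikx} dx`, as an `L²` function) vanishes a.e. outside `[-π, π]`;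
equivalently, `f` is the inverse transform `f(x) = (2π)^{-1/2} ∫ g(k) e^{ikx} dk` of an `L²`
function `g` vanishing a.e. outside `[-π, π]`.  Then `f(x) = sin(πx)/(πx)` for all `x`. -/
theorem stmt_5 (f : ℝ → ℝ) (hcont : Continuous f) (hf0 : f 0 = 1)
    (hL2 : (∫⁻ x : ℝ, ENNReal.ofReal ((f x) ^ 2)) ≤ 1)
    (hhat : ∃ g : ℝ → ℂ, MemLp g 2 (volume : Measure ℝ) ∧
      (∀ᵐ k : ℝ, k ∉ Set.Icc (-Real.pi) Real.pi → g k = 0) ∧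
      ∀ x : ℝ, (f x : ℂ) =
        ((Real.sqrt (2 * Real.pi))⁻¹ : ℝ) *
          ∫ k : ℝ, g k * Complex.exp (Complex.I * k * x)) :
    ∀ x : ℝ, f x = if x = 0 then 1 else Real.sin (Real.pi * x) / (Real.pi * x) := by
  classical
  obtain ⟨g, hg2, hgsupp, hgf⟩ := hhat
  have hg₀m : StronglyMeasurable (hg2.1.mk g) := hg2.1.stronglyMeasurable_mk
  set G : ℝ → ℂ := (Ioc (-π) π).indicator (hg2.1.mk g) with hGdef
  have hGm : Measurable G := hg₀m.measurable.indicator measurableSet_Ioc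
  have hne : ∀ᵐ k : ℝ, k ≠ -π := by
    rw [ae_iff]
    have : {a : ℝ | ¬ a ≠ -π} = {-π} := by ext a; simp
    rw [this]; exact Real.volume_singleton
  have hGg : g =ᵐ[volume] G := by
    filter_upwards [hg2.1.ae_eq_mk, hgsupp, hne] with k h1 h2 h3
    by_cases hk : k ∈ Ioc (-π) π
    · rw [hGdef, indicator_of_mem hk, ← h1]
    · have hkIcc : k ∉ Icc (-π) π := by
        intro hc
        exact hk ⟨lt_of_le_of_ne hc.1 (Ne.symm h3), hc.2⟩
      rw [hGdef, indicator_of_notMem hk, h2 hkIcc]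
  have hG2 : MemLp G 2 volume := hg2.ae_eq hGg
  have hGsupp : ∀ k ∉ Ioc (-π) π, G k = 0 := fun k hk => indicator_of_notMem hk _
  have hGi : Integrable G volume := by
    have h1 : IntegrableOn G (Ioc (-π) π) volume := by
      haveI : IsFiniteMeasure (volume.restrict (Ioc (-π) π)) := by
        constructor; rw [Measure.restrict_apply_univ]; exact measure_Ioc_lt_top
      exact (hG2.restrict _).integrable (by norm_num)
    rw [← integrable_indicator_iff measurableSet_Ioc] at h1
    rwa [indicator_eq_self.2 (fun k hk => by
      by_contra hc; exact hk (hGsupp k hc))] at h1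
  have hfor : ∀ x : ℝ, (f x : ℂ)
      = ((Real.sqrt (2*π))⁻¹ : ℝ) * ∫ k : ℝ, G k * Complex.exp (Complex.I * k * x) := by
    intro x; rw [hgf x]; congr 1
    exact integral_congr_ae (by filter_upwards [hGg] with k hk; rw [hk])
  have hsq : Real.sqrt (2*π) ^ 2 = 2*π := Real.sq_sqrt (by positivity)
  have hsqpos : (0:ℝ) < Real.sqrt (2*π) := Real.sqrt_pos.2 (by positivity)
  have hint : ∀ x : ℝ, (∫ k : ℝ, G k * Complex.exp (Complex.I * k * x))
      = ((Real.sqrt (2*π) * f x : ℝ) : ℂ) := by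
    intro x
    rw [Complex.ofReal_mul, hfor x, ← mul_assoc, ← Complex.ofReal_mul,
      mul_inv_cancel₀ hsqpos.ne', Complex.ofReal_one, one_mul]
  set B : ℝ := ∫ k in Ioc (-π) π, ‖G k‖ ^ 2 with hB
  have key : ∀ t : ℝ, HasSum (fun n : ℤ => f (t - n) ^ 2) B := by
    intro t
    set h : ℝ → ℂ := fun k => G k * Complex.exp (Complex.I * k * t) with hh
    have hexpm : Measurable fun k : ℝ => Complex.exp (Complex.I * k * t) := by fun_prop
    have hhm : Measurable h := hGm.mul hexpm
    have hnorm : ∀ k, ‖h k‖ = ‖G k‖ := by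
      intro k
      rw [hh]
      simp only [norm_mul, Complex.norm_exp]
      have : (Complex.I * k * t).re = 0 := by simp
      rw [this, Real.exp_zero, mul_one]
    have hh2 : MemLp h 2 volume := ⟨hhm.aestronglyMeasurable, by
      rw [eLpNorm_congr_norm_ae (ae_of_all _ hnorm)]; exact hG2.2⟩
    have hp := parseval_aux h hhm hh2
    have hsupph : ∀ k ∉ Ioc (-π) π, h k = 0 := fun k hk => by
      rw [hh]; simp only; rw [hGsupp k hk, zero_mul]
    have hih : Integrable h :=
      ⟨hhm.aestronglyMeasurable, by
        rw [hasFiniteIntegral_congr' (ae_of_all _ hnorm)]; exact hGi.2⟩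
    have hco : ∀ n : ℤ, fourierCoeff (AddCircle.liftIoc (2*π) (-π) h) n
        = (1/(2*π) : ℂ) * ((Real.sqrt (2*π) * f (t - n) : ℝ) : ℂ) := by
      intro n
      have e : (∫ k : ℝ, h k * Complex.exp (-(Complex.I * n * k)))
          = ∫ k : ℝ, G k * Complex.exp (Complex.I * k * ((t - n : ℝ) : ℂ)) := by
        refine integral_congr_ae (ae_of_all _ fun k => ?_)
        show G k * Complex.exp (Complex.I * k * t) * Complex.exp (-(Complex.I * n * k)) = _
        rw [mul_assoc, ← Complex.exp_add]
        congr 2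
        push_cast; ring
      rw [coeff_eq h hsupph hih n, e, hint (t - n)]
    have hnormco : ∀ n : ℤ, ‖fourierCoeff (AddCircle.liftIoc (2*π) (-π) h) n‖ ^ 2
        = (2*π)⁻¹ * f (t - n) ^ 2 := by
      intro n
      have hc1 : (1/(2*(π:ℂ))) = (((2*π)⁻¹ : ℝ) : ℂ) := by push_cast; ring
      rw [hco n, hc1, ← Complex.ofReal_mul, Complex.norm_real, Real.norm_eq_abs, _root_.sq_abs,
        mul_pow, mul_pow, hsq]
      have h2πne : (2*π) ≠ 0 := by positivity
      field_simp
    have hRHSeq : ((2*π)⁻¹ * ∫ k in Ioc (-π) (-π + 2*π), ‖h k‖ ^ 2) = (2*π)⁻¹ * B := by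
      congr 1
      rw [show -π + 2*π = π by ring, hB]
      exact setIntegral_congr_fun measurableSet_Ioc fun k _ => by rw [hnorm k]
    rw [hRHSeq] at hp
    simp only [hnormco] at hp
    have := hp.mul_left (2*π)
    have h2πne : (2*π) ≠ 0 := by positivity
    simp only [← mul_assoc, mul_inv_cancel₀ h2πne, one_mul] at this
    exact this
  have hBnn : 0 ≤ B := integral_nonneg fun k => sq_nonneg _
  have hB1 : B ≤ 1 := by
    have hFm : Measurable fun x : ℝ => ENNReal.ofReal (f x ^ 2) :=
      ((hcont.pow 2).measurable).ennreal_ofReal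
    have hlin : (∫⁻ x : ℝ, ENNReal.ofReal (f x ^ 2)) = ENNReal.ofReal B := by
      rw [lint_whole _ hFm]
      have hsum_t : ∀ t : ℝ, (∑' n : ℤ, ENNReal.ofReal (f (t + n) ^ 2)) = ENNReal.ofReal B := by
        intro t
        have hk2 : HasSum (fun n : ℤ => f (t + n) ^ 2) B := by
          have h' := ((Equiv.neg ℤ).hasSum_iff).2 (key t)
          simp only [Equiv.neg_apply, Function.comp_def, Int.cast_neg, sub_neg_eq_add] at h'
          exact h'
        rw [← ENNReal.ofReal_tsum_of_nonneg (fun n => sq_nonneg _) hk2.summable, hk2.tsum_eq]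
      have hmeasn : ∀ n : ℤ, AEMeasurable (fun t : ℝ => ENNReal.ofReal (f (t + n) ^ 2))
          (volume.restrict (Ioc (0:ℝ) 1)) := fun n =>
        (((hcont.comp (continuous_id.add continuous_const)).pow 2).measurable.ennreal_ofReal).aemeasurable
      rw [← lintegral_tsum (μ := volume.restrict (Ioc (0:ℝ) 1))
        (f := fun (n : ℤ) (t : ℝ) => ENNReal.ofReal (f (t + n) ^ 2)) hmeasn]
      calc (∫⁻ t in Ioc (0:ℝ) 1, ∑' n : ℤ, ENNReal.ofReal (f (t + n) ^ 2))
          = ∫⁻ _ in Ioc (0:ℝ) 1, ENNReal.ofReal B := by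
            exact lintegral_congr fun t => hsum_t t
        _ = ENNReal.ofReal B := by
            rw [lintegral_const, Measure.restrict_apply_univ, Real.volume_Ioc]
            norm_num
    rw [hlin] at hL2
    exact ENNReal.ofReal_le_one.1 hL2
  -- Step D : G is a.e. constant (2π)^{-1/2} on (-π, π]
  set c : ℝ := (Real.sqrt (2*π))⁻¹ with hc
  have hc2 : c ^ 2 = (2*π)⁻¹ := by rw [hc, inv_pow, hsq]
  haveI hfin : IsFiniteMeasure (volume.restrict (Ioc (-π) π)) := by
    constructor; rw [Measure.restrict_apply_univ]; exact measure_Ioc_lt_top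
  have hGtot : (∫ k in Ioc (-π) π, G k) = ((Real.sqrt (2*π) : ℝ) : ℂ) := by
    have h0 := hint 0
    simp only [Complex.ofReal_zero, mul_zero, Complex.exp_zero, mul_one, hf0] at h0
    rw [setIntegral_eq_integral_of_forall_compl_eq_zero (fun k hk => hGsupp k hk), h0]
  have hG2r : MemLp G 2 (volume.restrict (Ioc (-π) π)) := hG2.restrict _
  have hGir : Integrable G (volume.restrict (Ioc (-π) π)) := hGi.restrict
  have hsq_int : Integrable (fun k => ‖G k‖ ^ 2) (volume.restrict (Ioc (-π) π)) :=
    (memLp_two_iff_integrable_sq_norm hG2r.1).1 hG2r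
  have hsub2 : MemLp (fun k => G k - (c:ℂ)) 2 (volume.restrict (Ioc (-π) π)) :=
    hG2r.sub (memLp_const _)
  have hsub_int : Integrable (fun k => ‖G k - (c:ℂ)‖ ^ 2) (volume.restrict (Ioc (-π) π)) :=
    (memLp_two_iff_integrable_sq_norm hsub2.1).1 hsub2
  have hre_int : Integrable (fun k => (G k).re) (volume.restrict (Ioc (-π) π)) := hGir.re
  have hreG : (∫ k in Ioc (-π) π, (G k).re) = Real.sqrt (2*π) := by
    have h' := integral_re hGir
    simp only [RCLike.re_to_complex] at h'
    rw [h', hGtot, Complex.ofReal_re]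
  have hpt : ∀ z : ℂ, ‖z - (c:ℂ)‖ ^ 2 = ‖z‖ ^ 2 - 2*c*z.re + c ^ 2 := by
    intro z
    rw [Complex.sq_norm, Complex.sq_norm]
    simp only [Complex.normSq_apply, Complex.sub_re, Complex.sub_im, Complex.ofReal_re,
      Complex.ofReal_im]
    ring
  have hDeq : (∫ k in Ioc (-π) π, ‖G k - (c:ℂ)‖ ^ 2) = B - 1 := by
    have e0 : (∫ k in Ioc (-π) π, ‖G k - (c:ℂ)‖ ^ 2)
        = ∫ k in Ioc (-π) π, (‖G k‖ ^ 2 - 2*c*(G k).re + c ^ 2) :=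
      integral_congr_ae (ae_of_all _ fun k => hpt (G k))
    have i1 : Integrable (fun k => ‖G k‖ ^ 2 - 2*c*(G k).re) (volume.restrict (Ioc (-π) π)) :=
      hsq_int.sub (hre_int.const_mul (2*c))
    have h1 : c * Real.sqrt (2*π) = 1 := inv_mul_cancel₀ hsqpos.ne'
    have hcc : (2*π) * c ^ 2 = 1 := by
      rw [hc2]; field_simp
    rw [e0, integral_add i1 (integrable_const _),
      integral_sub hsq_int (hre_int.const_mul (2*c)), integral_const_mul (2*c), hreG, ← hB,
      integral_const, measureReal_def, Measure.restrict_apply_univ, Real.volume_Ioc,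
      show π - -π = 2*π by ring, ENNReal.toReal_ofReal (by positivity), smul_eq_mul]
    linear_combination (-2 : ℝ) * h1 + hcc
  have hDnn : 0 ≤ ∫ k in Ioc (-π) π, ‖G k - (c:ℂ)‖ ^ 2 :=
    integral_nonneg fun k => sq_nonneg _
  have hDzero : (∫ k in Ioc (-π) π, ‖G k - (c:ℂ)‖ ^ 2) = 0 := le_antisymm (by rw [hDeq]; linarith) hDnn
  have hGc : G =ᵐ[volume.restrict (Ioc (-π) π)] fun _ => (c:ℂ) := by
    have hz := (integral_eq_zero_iff_of_nonneg_ae (ae_of_all _ fun k => sq_nonneg _) hsub_int).1 hDzero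
    filter_upwards [hz] with k hk
    have : ‖G k - (c:ℂ)‖ ^ 2 = 0 := hk
    have : G k - (c:ℂ) = 0 := by
      rwa [pow_eq_zero_iff (two_ne_zero), norm_eq_zero] at this
    exact sub_eq_zero.1 this
  -- Step E : compute f
  intro x
  by_cases hx : x = 0
  · simp [hx, hf0]
  · rw [if_neg hx]
    have h1 : (f x : ℂ) = ((c : ℝ) : ℂ) * ((c : ℝ) : ℂ)
        * ∫ k in Ioc (-π) π, Complex.exp (Complex.I * k * x) := by
      rw [hfor x, ← setIntegral_eq_integral_of_forall_compl_eq_zero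
        (fun k hk => by rw [hGsupp k hk, zero_mul])]
      have e1 : (∫ k in Ioc (-π) π, G k * Complex.exp (Complex.I * k * x))
          = ∫ k in Ioc (-π) π, ((c : ℝ) : ℂ) * Complex.exp (Complex.I * k * x) :=
        integral_congr_ae (by filter_upwards [hGc] with k hk; rw [hk])
      rw [e1, integral_const_mul, ← mul_assoc]
    have hIx : (Complex.I * (x:ℂ)) ≠ 0 := by
      simp [Complex.I_ne_zero, hx]
    have h2 : (∫ k in Ioc (-π) π, Complex.exp (Complex.I * k * x))
        = 2 * (Real.sin (π * x) : ℂ) / (x : ℂ) := by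
      rw [← intervalIntegral.integral_of_le (by linarith [Real.pi_pos] : -π ≤ π)]
      have e2 : ∀ k : ℝ, Complex.exp (Complex.I * k * x)
          = Complex.exp ((Complex.I * x) * k) := fun k => by ring_nf
      simp_rw [e2]
      rw [integral_exp_mul_complex hIx]
      have hxC : (x : ℂ) ≠ 0 := fun h => hx (by exact_mod_cast h)
      rw [show Complex.I * (x:ℂ) * ((π:ℝ):ℂ) = ((π:ℂ) * x) * Complex.I from by push_cast; ring,
        show Complex.I * (x:ℂ) * ((-π:ℝ):ℂ) = (-((π:ℂ) * x)) * Complex.I from by push_cast; ring,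
        Complex.exp_mul_I, Complex.exp_mul_I, Complex.cos_neg, Complex.sin_neg,
        Complex.ofReal_sin]
      push_cast
      field_simp [Complex.I_ne_zero, hxC]
      ring
    have h3 : (f x : ℂ) = ((Real.sin (π * x) / (π * x) : ℝ) : ℂ) := by
      have hxC : (x : ℂ) ≠ 0 := fun h => hx (by exact_mod_cast h)
      have hπC : ((π:ℝ) : ℂ) ≠ 0 := by
        simpa using Real.pi_ne_zero
      have hcmul : ((c:ℝ):ℂ) * ((c:ℝ):ℂ) = (((2*π)⁻¹ : ℝ) : ℂ) := by
        rw [← Complex.ofReal_mul, ← hc2, sq]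
      rw [h1, h2, hcmul]
      push_cast
      field_simp
    exact_mod_cast h3

end
end

section
/- (Zero-avoidance lemma, from the proof of Theorem 2.1) Let (z_j)_{j∈ℤ} be a nondecreasing bi-infinite sequence of real numbers satisfying z_j − z_k ≥ (j − k) − 1 whenever j ≥ k. Then for every x ∈ ℝ there exists δ ∈ [0, 1] such that |z_j − (x + δ)| ≥ 1/10 and |z_j − (x − δ)| ≥ 1/10 for all j ∈ ℤ. Moreover, at most 5 of the z_j lie in the open interval (x − 1.1, x + 1.1). -/
/-- **Zero-avoidance lemma** from the proof of Theorem 2.1 in Avila–Last–Simon: if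
`(z_j)_{j ∈ ℤ}` is nondecreasing with `z_j - z_k ≥ (j - k) - 1` for `k ≤ j`, then for every
`x ∈ ℝ` there is `δ ∈ [0,1]` with `|z_j - (x ± δ)| ≥ 1/10` for all `j`, and at most `5` of the
`z_j` lie in `(x - 1.1, x + 1.1)`. -/
theorem stmt_7 (z : ℤ → ℝ) (hmono : Monotone z)
    (hgap : ∀ j k : ℤ, k ≤ j → ((j : ℝ) - (k : ℝ)) - 1 ≤ z j - z k) :
    ∀ x : ℝ,
      (∃ δ ∈ Set.Icc (0 : ℝ) 1,
        ∀ j : ℤ, (1 : ℝ) / 10 ≤ |z j - (x + δ)| ∧ (1 : ℝ) / 10 ≤ |z j - (x - δ)|) ∧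
      Set.ncard {j : ℤ | x - 1.1 < z j ∧ z j < x + 1.1} ≤ 5 := by
  intro x
  have spn : ∀ j k : ℤ, |z j - x| ≤ 1.1 → |z k - x| ≤ 1.1 → j ≤ k + 3 := by
    intro j k hj hk
    rcases le_total k j with hkj | hjk
    · have hg := hgap j k hkj
      have hj' := abs_le.mp hj
      have hk' := abs_le.mp hk
      have hcast : (j : ℝ) < ((k + 4 : ℤ) : ℝ) := by
        push_cast
        norm_num at hj' hk' ⊢
        linarith
      have : j < k + 4 := by exact_mod_cast hcast
      omega
    · omega
  constructor
  · by_contra hcon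
    push_neg at hcon
    have key : ∀ c : ℝ, 0 ≤ c → c ≤ 1 → ∃ j : ℤ, |(|z j - x| - c)| < 1 / 10 := by
      intro c hc0 hc1
      obtain ⟨j, hj⟩ := hcon c ⟨hc0, hc1⟩
      refine ⟨j, ?_⟩
      rcases lt_or_ge |z j - (x + c)| (1 / 10) with h | h
      · calc |(|z j - x| - c)| = |(|z j - x| - |c|)| := by rw [abs_of_nonneg hc0]
          _ ≤ |(z j - x) - c| := abs_abs_sub_abs_le_abs_sub _ _
          _ = |z j - (x + c)| := by ring_nf
          _ < 1 / 10 := h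
      · have h2 := hj h
        calc |(|z j - x| - c)| = |(|z j - x| - |(-c)|)| := by rw [abs_neg, abs_of_nonneg hc0]
          _ ≤ |(z j - x) - (-c)| := abs_abs_sub_abs_le_abs_sub _ _
          _ = |z j - (x - c)| := by ring_nf
          _ < 1 / 10 := h2
    have pair : ∀ a b : ℝ, ∀ ja jb : ℤ, 0 ≤ a → a ≤ 1 → 0 ≤ b → b ≤ 1 →
        |(|z ja - x| - a)| < 1 / 10 → |(|z jb - x| - b)| < 1 / 10 → 1 / 5 ≤ |a - b| →
        ja ≠ jb ∧ ja ≤ jb + 3 ∧ jb ≤ ja + 3 := by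
      intro a b ja jb ha0 ha1 hb0 hb1 hja hjb hab
      have hda := abs_lt.mp hja
      have hdb := abs_lt.mp hjb
      have habs_a : |z ja - x| ≤ 1.1 := by
        rw [show (1.1 : ℝ) = 11 / 10 by norm_num]; linarith
      have habs_b : |z jb - x| ≤ 1.1 := by
        rw [show (1.1 : ℝ) = 11 / 10 by norm_num]; linarith
      refine ⟨?_, spn ja jb habs_a habs_b, spn jb ja habs_b habs_a⟩
      intro he
      subst he
      have h3 := abs_sub_le a (|z ja - x|) b
      rw [abs_sub_comm a (|z ja - x|)] at h3
      linarith
    obtain ⟨j0, h0⟩ := key 0 (by norm_num) (by norm_num)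
    obtain ⟨j1, h1⟩ := key (1 / 5) (by norm_num) (by norm_num)
    obtain ⟨j2, h2⟩ := key (2 / 5) (by norm_num) (by norm_num)
    obtain ⟨j3, h3⟩ := key (3 / 5) (by norm_num) (by norm_num)
    obtain ⟨j4, h4⟩ := key (4 / 5) (by norm_num) (by norm_num)
    obtain ⟨j5, h5⟩ := key 1 (by norm_num) (by norm_num)
    obtain ⟨n01, l01, l10⟩ := pair 0 (1/5) j0 j1 (by norm_num) (by norm_num) (by norm_num) (by norm_num) h0 h1 (by rw [abs_sub_comm]; norm_num [abs_of_nonneg])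
    obtain ⟨n02, l02, l20⟩ := pair 0 (2/5) j0 j2 (by norm_num) (by norm_num) (by norm_num) (by norm_num) h0 h2 (by rw [abs_sub_comm]; norm_num [abs_of_nonneg])
    obtain ⟨n03, l03, l30⟩ := pair 0 (3/5) j0 j3 (by norm_num) (by norm_num) (by norm_num) (by norm_num) h0 h3 (by rw [abs_sub_comm]; norm_num [abs_of_nonneg])
    obtain ⟨n04, l04, l40⟩ := pair 0 (4/5) j0 j4 (by norm_num) (by norm_num) (by norm_num) (by norm_num) h0 h4 (by rw [abs_sub_comm]; norm_num [abs_of_nonneg])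
    obtain ⟨n05, l05, l50⟩ := pair 0 1 j0 j5 (by norm_num) (by norm_num) (by norm_num) (by norm_num) h0 h5 (by rw [abs_sub_comm]; norm_num [abs_of_nonneg])
    obtain ⟨n12, l12, l21⟩ := pair (1/5) (2/5) j1 j2 (by norm_num) (by norm_num) (by norm_num) (by norm_num) h1 h2 (by rw [abs_sub_comm]; norm_num [abs_of_nonneg])
    obtain ⟨n13, l13, l31⟩ := pair (1/5) (3/5) j1 j3 (by norm_num) (by norm_num) (by norm_num) (by norm_num) h1 h3 (by rw [abs_sub_comm]; norm_num [abs_of_nonneg])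
    obtain ⟨n14, l14, l41⟩ := pair (1/5) (4/5) j1 j4 (by norm_num) (by norm_num) (by norm_num) (by norm_num) h1 h4 (by rw [abs_sub_comm]; norm_num [abs_of_nonneg])
    obtain ⟨n15, l15, l51⟩ := pair (1/5) 1 j1 j5 (by norm_num) (by norm_num) (by norm_num) (by norm_num) h1 h5 (by rw [abs_sub_comm]; norm_num [abs_of_nonneg])
    obtain ⟨n23, l23, l32⟩ := pair (2/5) (3/5) j2 j3 (by norm_num) (by norm_num) (by norm_num) (by norm_num) h2 h3 (by rw [abs_sub_comm]; norm_num [abs_of_nonneg])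
    obtain ⟨n24, l24, l42⟩ := pair (2/5) (4/5) j2 j4 (by norm_num) (by norm_num) (by norm_num) (by norm_num) h2 h4 (by rw [abs_sub_comm]; norm_num [abs_of_nonneg])
    obtain ⟨n25, l25, l52⟩ := pair (2/5) 1 j2 j5 (by norm_num) (by norm_num) (by norm_num) (by norm_num) h2 h5 (by rw [abs_sub_comm]; norm_num [abs_of_nonneg])
    obtain ⟨n34, l34, l43⟩ := pair (3/5) (4/5) j3 j4 (by norm_num) (by norm_num) (by norm_num) (by norm_num) h3 h4 (by rw [abs_sub_comm]; norm_num [abs_of_nonneg])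
    obtain ⟨n35, l35, l53⟩ := pair (3/5) 1 j3 j5 (by norm_num) (by norm_num) (by norm_num) (by norm_num) h3 h5 (by rw [abs_sub_comm]; norm_num [abs_of_nonneg])
    obtain ⟨n45, l45, l54⟩ := pair (4/5) 1 j4 j5 (by norm_num) (by norm_num) (by norm_num) (by norm_num) h4 h5 (by rw [abs_sub_comm]; norm_num [abs_of_nonneg])
    omega
  · rcases Set.eq_empty_or_nonempty {j : ℤ | x - 1.1 < z j ∧ z j < x + 1.1} with he | ⟨m, hm⟩
    · rw [he]; simp
    · have habs : ∀ j : ℤ, j ∈ {j : ℤ | x - 1.1 < z j ∧ z j < x + 1.1} → |z j - x| ≤ 1.1 := by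
        intro j hj
        obtain ⟨a, b⟩ := hj
        rw [abs_le]
        constructor <;> linarith
      have hsub : {j : ℤ | x - 1.1 < z j ∧ z j < x + 1.1} ⊆ Set.Icc (m - 3) (m + 3) := by
        intro j hj
        have h1 := habs j hj
        have h2 := habs m hm
        exact ⟨by have := spn m j h2 h1; omega, by have := spn j m h1 h2; omega⟩
      have hfin : {j : ℤ | x - 1.1 < z j ∧ z j < x + 1.1}.Finite :=
        (Set.finite_Icc (m - 3) (m + 3)).subset hsub
      have hne : hfin.toFinset.Nonempty := ⟨m, hfin.mem_toFinset.mpr hm⟩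
      set k0 := hfin.toFinset.min' hne with hk0
      have hk0mem : k0 ∈ {j : ℤ | x - 1.1 < z j ∧ z j < x + 1.1} :=
        hfin.mem_toFinset.mp (hfin.toFinset.min'_mem hne)
      have hsub2 : {j : ℤ | x - 1.1 < z j ∧ z j < x + 1.1} ⊆ ↑(Finset.Icc k0 (k0 + 3)) := by
        intro j hj
        simp only [Finset.coe_Icc, Set.mem_Icc]
        refine ⟨hfin.toFinset.min'_le j (hfin.mem_toFinset.mpr hj), ?_⟩
        exact spn j k0 (habs j hj) (habs k0 hk0mem)
      calc Set.ncard {j : ℤ | x - 1.1 < z j ∧ z j < x + 1.1}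
          ≤ Set.ncard ↑(Finset.Icc k0 (k0 + 3)) :=
            Set.ncard_le_ncard hsub2 (Finset.Icc k0 (k0 + 3)).finite_toSet
        _ = (Finset.Icc k0 (k0 + 3)).card := Set.ncard_coe_finset _
        _ ≤ 5 := by rw [Int.card_Icc]; omega
end

section
/- (Theorem 3, first part) Fix x₀ ∈ ℝ and suppose sup_n (1/(n+1)) Σ_{j=0}^n ‖T_j(x₀)‖² ≤ C < ∞. Then for all z ∈ ℂ and all n ≥ 0, (1/(n+1)) Σ_{j=0}^n ‖T_j(x₀ + z/(n+1))‖² ≤ C exp(2 C α_-^{−1} |z|). -/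
open scoped Matrix.Norms.L2Operator
open Matrix

section Helpers

lemma ALS.opnorm_le (A : Matrix (Fin 2) (Fin 2) ℂ) (c : ℝ) (hc : 0 ≤ c)
    (h : ∀ x : EuclideanSpace ℂ (Fin 2),
      ‖(EuclideanSpace.equiv (Fin 2) ℂ).symm (A.mulVec x)‖ ≤ c * ‖x‖) :
    ‖A‖ ≤ c := by
  rw [Matrix.cstar_norm_def]
  exact ContinuousLinearMap.opNorm_le_bound _ hc h

lemma ALS.enorm (v : EuclideanSpace ℂ (Fin 2)) : ‖v‖ = Real.sqrt (‖v 0‖^2 + ‖v 1‖^2) := by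
  rw [EuclideanSpace.norm_eq]; simp [Fin.sum_univ_two]

lemma ALS.norm_E11 (x : ℂ) : ‖(!![x,0;0,0] : Matrix (Fin 2) (Fin 2) ℂ)‖ ≤ ‖x‖ := by
  apply ALS.opnorm_le _ _ (norm_nonneg x)
  intro v
  have h1 : ((EuclideanSpace.equiv (Fin 2) ℂ).symm
      ((!![x,0;0,0] : Matrix (Fin 2) (Fin 2) ℂ).mulVec v)) 0 = x * v 0 := by
    simp [Matrix.mulVec, dotProduct, Fin.sum_univ_two]
  have h2 : ((EuclideanSpace.equiv (Fin 2) ℂ).symm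
      ((!![x,0;0,0] : Matrix (Fin 2) (Fin 2) ℂ).mulVec v)) 1 = 0 := by
    simp [Matrix.mulVec, dotProduct, Fin.sum_univ_two]
  rw [ALS.enorm, h1, h2, ALS.enorm v]
  rw [← Real.sqrt_mul_self (mul_nonneg (norm_nonneg x) (Real.sqrt_nonneg _))]
  apply Real.sqrt_le_sqrt
  rw [mul_mul_mul_comm, Real.mul_self_sqrt (by positivity)]
  simp only [norm_mul, norm_zero]
  ring_nf
  nlinarith [norm_nonneg (v 1), norm_nonneg x, sq_nonneg ‖(v 1 : ℂ)‖]

lemma ALS.norm_adjugate_le (M : Matrix (Fin 2) (Fin 2) ℂ) : ‖M.adjugate‖ ≤ ‖M‖ := by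
  apply ALS.opnorm_le _ _ (norm_nonneg M)
  intro v
  set y : EuclideanSpace ℂ (Fin 2) :=
    (EuclideanSpace.equiv (Fin 2) ℂ).symm ![(starRingEnd ℂ) (v 1), -((starRingEnd ℂ) (v 0))] with hy
  have hynorm : ‖y‖ = ‖v‖ := by
    rw [ALS.enorm, ALS.enorm v]
    have h0 : y 0 = (starRingEnd ℂ) (v 1) := rfl
    have h1 : y 1 = -((starRingEnd ℂ) (v 0)) := rfl
    rw [h0, h1, norm_neg, RCLike.norm_conj, RCLike.norm_conj, add_comm]
  have key : ‖(EuclideanSpace.equiv (Fin 2) ℂ).symm (M.adjugate.mulVec v)‖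
      = ‖(EuclideanSpace.equiv (Fin 2) ℂ).symm (Matrix.mulVec Mᴴ y)‖ := by
    have e0 : (Matrix.mulVec Mᴴ y) 0 = (starRingEnd ℂ) (M.adjugate.mulVec v 1) := by
      simp [Matrix.adjugate_fin_two, Matrix.mulVec, dotProduct, Fin.sum_univ_two,
        Matrix.conjTranspose_apply, hy, map_add, _root_.map_mul, map_neg]
      ring
    have e1 : (Matrix.mulVec Mᴴ y) 1 = -((starRingEnd ℂ) (M.adjugate.mulVec v 0)) := by
      simp [Matrix.adjugate_fin_two, Matrix.mulVec, dotProduct, Fin.sum_univ_two,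
        Matrix.conjTranspose_apply, hy, map_add, _root_.map_mul, map_neg]
    rw [ALS.enorm, ALS.enorm]
    have f0 : ((EuclideanSpace.equiv (Fin 2) ℂ).symm (Matrix.mulVec Mᴴ y)) 0
        = (Matrix.mulVec Mᴴ y) 0 := rfl
    have f1 : ((EuclideanSpace.equiv (Fin 2) ℂ).symm (Matrix.mulVec Mᴴ y)) 1
        = (Matrix.mulVec Mᴴ y) 1 := rfl
    rw [f0, f1, e0, e1, norm_neg, RCLike.norm_conj, RCLike.norm_conj, add_comm]
    rfl
  rw [key, ← hynorm]
  calc ‖(EuclideanSpace.equiv (Fin 2) ℂ).symm (Matrix.mulVec Mᴴ y)‖ ≤ ‖Mᴴ‖ * ‖y‖ :=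
        Matrix.l2_opNorm_mulVec Mᴴ y
    _ = ‖M‖ * ‖y‖ := by rw [Matrix.l2_opNorm_conjTranspose]

end Helpers

/-- The one-step matrix `A_j(z)` built from Jacobi parameters. -/
noncomputable def jacobiA (a b : ℕ → ℝ) (j : ℕ) (z : ℂ) : Matrix (Fin 2) (Fin 2) ℂ :=
  !![(z - (b j : ℂ)) / (a j : ℂ), -1 / (a j : ℂ); ((a j : ℂ)), 0]

/-- The transfer matrix `T_n(z) = A_n(z) ⋯ A_1(z)`, with `T_0(z) = I`. -/
noncomputable def transfer (a b : ℕ → ℝ) : ℕ → ℂ → Matrix (Fin 2) (Fin 2) ℂ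
  | 0 => fun _ => 1
  | n + 1 => fun z => jacobiA a b (n + 1) z * transfer a b n z

section ALS
variable (a b : ℕ → ℝ)

lemma ALS.det_jacobiA {j : ℕ} (h : a j ≠ 0) (z : ℂ) : (jacobiA a b j z).det = 1 := by
  have : ((a j : ℂ)) ≠ 0 := by exact_mod_cast h
  simp [jacobiA, Matrix.det_fin_two_of]
  field_simp

lemma ALS.det_transfer (hapos : ∀ n : ℕ, 0 < a (n + 1)) (j : ℕ) (z : ℂ) :
    (transfer a b j z).det = 1 := by
  induction j with
  | zero => simp [transfer]
  | succ n ih => rw [transfer, Matrix.det_mul, ih, ALS.det_jacobiA a b (hapos n).ne' z, one_mul]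

lemma ALS.transfer_mul_inv (hapos : ∀ n : ℕ, 0 < a (n + 1)) (j : ℕ) (z : ℂ) :
    transfer a b j z * (transfer a b j z)⁻¹ = 1 :=
  Matrix.mul_nonsing_inv _ (by rw [ALS.det_transfer a b hapos]; exact isUnit_one)

lemma ALS.norm_transfer_inv_le (hapos : ∀ n : ℕ, 0 < a (n + 1)) (j : ℕ) (z : ℂ) :
    ‖(transfer a b j z)⁻¹‖ ≤ ‖transfer a b j z‖ := by
  rw [Matrix.inv_def, ALS.det_transfer a b hapos, Ring.inverse_one, one_smul]
  exact ALS.norm_adjugate_le _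

lemma ALS.jacobiA_sub (j : ℕ) (z₁ z₂ : ℂ) :
    jacobiA a b j z₂ - jacobiA a b j z₁ = !![(z₂ - z₁) / (a j : ℂ), 0; 0, 0] := by
  ext i k
  fin_cases i <;> fin_cases k <;>
    simp [jacobiA] <;> ring

lemma ALS.norm_jacobiA_sub_le {j : ℕ} (h : 0 < a j) (z₁ z₂ : ℂ) :
    ‖jacobiA a b j z₂ - jacobiA a b j z₁‖ ≤ ‖z₂ - z₁‖ / a j := by
  rw [ALS.jacobiA_sub]
  calc ‖(!![(z₂ - z₁) / (a j : ℂ), 0; 0, 0] : Matrix (Fin 2) (Fin 2) ℂ)‖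
      ≤ ‖(z₂ - z₁) / (a j : ℂ)‖ := ALS.norm_E11 _
    _ = ‖z₂ - z₁‖ / a j := by
        rw [norm_div, Complex.norm_real, Real.norm_of_nonneg h.le]

lemma ALS.telescoping (hapos : ∀ n : ℕ, 0 < a (n + 1)) (z₁ z₂ : ℂ) (j : ℕ) :
    transfer a b j z₂ = transfer a b j z₁ +
      ∑ k ∈ Finset.range j, transfer a b j z₁ * (transfer a b (k+1) z₁)⁻¹ *
        (jacobiA a b (k+1) z₂ - jacobiA a b (k+1) z₁) * transfer a b k z₂ := by
  induction j with
  | zero => simp [transfer]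
  | succ n ih =>
    have hA : jacobiA a b (n+1) z₁ * transfer a b n z₁ = transfer a b (n+1) z₁ := rfl
    have hD : (jacobiA a b (n+1) z₂ - jacobiA a b (n+1) z₁) * transfer a b n z₂ =
        transfer a b (n+1) z₁ * (transfer a b (n+1) z₁)⁻¹ *
          (jacobiA a b (n+1) z₂ - jacobiA a b (n+1) z₁) * transfer a b n z₂ := by
      rw [ALS.transfer_mul_inv a b hapos, one_mul]
    have hT : ∀ k, jacobiA a b (n+1) z₁ * (transfer a b n z₁ * (transfer a b (k+1) z₁)⁻¹ *
        (jacobiA a b (k+1) z₂ - jacobiA a b (k+1) z₁) * transfer a b k z₂) =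
        transfer a b (n+1) z₁ * (transfer a b (k+1) z₁)⁻¹ *
        (jacobiA a b (k+1) z₂ - jacobiA a b (k+1) z₁) * transfer a b k z₂ := by
      intro k
      rw [← hA]
      noncomm_ring
    calc transfer a b (n+1) z₂
        = jacobiA a b (n+1) z₁ * transfer a b n z₂
          + (jacobiA a b (n+1) z₂ - jacobiA a b (n+1) z₁) * transfer a b n z₂ := by
          rw [transfer, sub_mul]; abel
      _ = jacobiA a b (n+1) z₁ * (transfer a b n z₁ +
            ∑ k ∈ Finset.range n, transfer a b n z₁ * (transfer a b (k+1) z₁)⁻¹ *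
              (jacobiA a b (k+1) z₂ - jacobiA a b (k+1) z₁) * transfer a b k z₂)
          + (jacobiA a b (n+1) z₂ - jacobiA a b (n+1) z₁) * transfer a b n z₂ := by rw [← ih]
      _ = transfer a b (n+1) z₁ +
          ((∑ k ∈ Finset.range n, transfer a b (n+1) z₁ * (transfer a b (k+1) z₁)⁻¹ *
              (jacobiA a b (k+1) z₂ - jacobiA a b (k+1) z₁) * transfer a b k z₂)
            + transfer a b (n+1) z₁ * (transfer a b (n+1) z₁)⁻¹ *
              (jacobiA a b (n+1) z₂ - jacobiA a b (n+1) z₁) * transfer a b n z₂) := by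
          rw [mul_add, Finset.mul_sum, hA]
          simp_rw [hT]
          rw [← hD]
          abel
      _ = transfer a b (n+1) z₁ +
          ∑ k ∈ Finset.range (n+1), transfer a b (n+1) z₁ * (transfer a b (k+1) z₁)⁻¹ *
            (jacobiA a b (k+1) z₂ - jacobiA a b (k+1) z₁) * transfer a b k z₂ := by
          rw [Finset.sum_range_succ]

end ALS

set_option maxHeartbeats 1000000 in
/-- **Theorem 3, first part** of Avila–Last–Simon: if the Ces\`aro averages
`(1/(n+1)) Σ_{j=0}^n ‖T_j(x₀)‖²` are bounded by `C`, then for all `z ∈ ℂ` and all `n`,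
`(1/(n+1)) Σ_{j=0}^n ‖T_j(x₀ + z/(n+1))‖² ≤ C exp(2 C α₋⁻¹ |z|)`, where `α₋ = inf_n a_n > 0`
and `‖·‖` is the Euclidean operator norm. -/
theorem stmt_9 (a b : ℕ → ℝ) (hapos : ∀ n : ℕ, 0 < a (n + 1))
    (αm : ℝ) (hαm_pos : 0 < αm) (hαm : αm = ⨅ n : ℕ, a (n + 1))
    (x₀ : ℝ) (C : ℝ)
    (hC : ∀ n : ℕ,
      (1 / (n + 1) : ℝ) * ∑ j ∈ Finset.range (n + 1), ‖transfer a b j (x₀ : ℂ)‖ ^ 2 ≤ C) :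
    ∀ (z : ℂ) (n : ℕ),
      (1 / (n + 1) : ℝ) *
          ∑ j ∈ Finset.range (n + 1), ‖transfer a b j ((x₀ : ℂ) + z / (n + 1))‖ ^ 2 ≤
        C * Real.exp (2 * C * αm⁻¹ * ‖z‖) := by
  intro z n
  have hn : (0:ℝ) < (n:ℝ) + 1 := by positivity
  set z' : ℂ := (x₀ : ℂ) + z / (n + 1) with hz'
  set t : ℕ → ℝ := fun j => ‖transfer a b j (x₀ : ℂ)‖ with ht
  set S : ℕ → ℝ := fun j => ‖transfer a b j z'‖ with hS
  set c : ℝ := ‖z‖ / (((n:ℝ) + 1) * αm) with hc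
  have hc0 : 0 ≤ c := by positivity
  have ht0 : ∀ j, 0 ≤ t j := fun j => norm_nonneg _
  have hS0 : ∀ j, 0 ≤ S j := fun j => norm_nonneg _
  -- the Cesàro hypothesis, cleared of the denominator
  have hsum : ∑ j ∈ Finset.range (n + 1), t j ^ 2 ≤ C * ((n:ℝ) + 1) := by
    have h := hC n
    calc ∑ j ∈ Finset.range (n + 1), t j ^ 2
        = ((n:ℝ) + 1) * ((1 / ((n:ℝ) + 1)) * ∑ j ∈ Finset.range (n + 1), t j ^ 2) := by
          field_simp
      _ ≤ ((n:ℝ) + 1) * C := mul_le_mul_of_nonneg_left h hn.le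
      _ = C * ((n:ℝ) + 1) := mul_comm _ _
  have hC0 : 0 ≤ C := by
    have h := hC 0
    simp only [Nat.cast_zero, zero_add, Finset.sum_range_one] at h
    nlinarith [sq_nonneg (t 0), ht0 0]
  -- norm of the perturbation w := z/(n+1)
  have hwnorm : ‖z' - (x₀ : ℂ)‖ = ‖z‖ / ((n:ℝ) + 1) := by
    rw [hz']
    have : (x₀ : ℂ) + z / (↑n + 1) - (x₀ : ℂ) = z / (↑n + 1) := by ring
    rw [this, norm_div]
    congr 1
    have : ((n:ℂ) + 1) = ((n + 1 : ℕ) : ℂ) := by push_cast; ring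
    rw [this, Complex.norm_natCast]
    push_cast; ring
  -- the one-step perturbation bound
  have hDle : ∀ k : ℕ, ‖jacobiA a b (k+1) z' - jacobiA a b (k+1) (x₀ : ℂ)‖ ≤ c := by
    intro k
    have hαa : αm ≤ a (k + 1) := by
      rw [hαm]
      exact ciInf_le ⟨0, by rintro x ⟨m, rfl⟩; exact (hapos m).le⟩ k
    calc ‖jacobiA a b (k+1) z' - jacobiA a b (k+1) (x₀ : ℂ)‖
        ≤ ‖z' - (x₀ : ℂ)‖ / a (k + 1) := ALS.norm_jacobiA_sub_le a b (hapos k) _ _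
      _ = (‖z‖ / ((n:ℝ) + 1)) / a (k + 1) := by rw [hwnorm]
      _ ≤ c := by
          rw [hc, div_div]
          apply div_le_div_of_nonneg_left (norm_nonneg z) (by positivity)
          exact mul_le_mul_of_nonneg_left hαa hn.le
  -- the basic norm inequality from the telescoping identity
  have hstep : ∀ j, S j ≤ t j + ∑ k ∈ Finset.range j, t j * t (k+1) * c * S k := by
    intro j
    have htel := ALS.telescoping a b hapos (x₀ : ℂ) z' j
    calc S j = ‖transfer a b j z'‖ := rfl
      _ = ‖transfer a b j (x₀:ℂ) +
            ∑ k ∈ Finset.range j, transfer a b j (x₀:ℂ) * (transfer a b (k+1) (x₀:ℂ))⁻¹ *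
              (jacobiA a b (k+1) z' - jacobiA a b (k+1) (x₀:ℂ)) * transfer a b k z'‖ := by
          rw [← htel]
      _ ≤ t j + ‖∑ k ∈ Finset.range j, transfer a b j (x₀:ℂ) * (transfer a b (k+1) (x₀:ℂ))⁻¹ *
              (jacobiA a b (k+1) z' - jacobiA a b (k+1) (x₀:ℂ)) * transfer a b k z'‖ :=
          norm_add_le _ _
      _ ≤ t j + ∑ k ∈ Finset.range j, t j * t (k+1) * c * S k := by
          have hterm : ∀ k, ‖transfer a b j (x₀:ℂ) * (transfer a b (k+1) (x₀:ℂ))⁻¹ *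
                (jacobiA a b (k+1) z' - jacobiA a b (k+1) (x₀:ℂ)) * transfer a b k z'‖
              ≤ t j * t (k+1) * c * S k := by
            intro k
            have h1 : ‖transfer a b j (x₀:ℂ) * (transfer a b (k+1) (x₀:ℂ))⁻¹‖
                ≤ t j * t (k+1) :=
              le_trans (Matrix.l2_opNorm_mul _ _)
                (mul_le_mul_of_nonneg_left
                  (ALS.norm_transfer_inv_le a b hapos (k+1) _) (ht0 j))
            have h2 : ‖transfer a b j (x₀:ℂ) * (transfer a b (k+1) (x₀:ℂ))⁻¹ *
                  (jacobiA a b (k+1) z' - jacobiA a b (k+1) (x₀:ℂ))‖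
                ≤ t j * t (k+1) * c :=
              le_trans (Matrix.l2_opNorm_mul _ _)
                (mul_le_mul h1 (hDle k) (norm_nonneg _)
                  (mul_nonneg (ht0 j) (ht0 (k+1))))
            exact le_trans (Matrix.l2_opNorm_mul _ _)
              (mul_le_mul h2 le_rfl (hS0 k)
                (mul_nonneg (mul_nonneg (ht0 j) (ht0 (k+1))) hc0))
          exact add_le_add_right
            (le_trans (norm_sum_le _ _) (Finset.sum_le_sum fun k _ => hterm k)) (t j)
  -- Gronwall
  set R : ℕ → ℝ := fun j => ∏ k ∈ Finset.range j, (1 + c * (t (k+1) * t k)) with hR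
  have hfac : ∀ k, (0:ℝ) ≤ 1 + c * (t (k+1) * t k) := by
    intro k
    have : 0 ≤ c * (t (k+1) * t k) := by positivity
    linarith
  have hR0 : ∀ j, 0 ≤ R j := fun j => Finset.prod_nonneg fun k _ => hfac k
  have hR1 : ∀ j, 1 + ∑ k ∈ Finset.range j, c * (t (k+1) * t k) * R k = R j := by
    intro j
    induction j with
    | zero => simp [hR]
    | succ m ihm =>
      rw [Finset.sum_range_succ, ← add_assoc, ihm]
      have hsucc : R (m+1) = R m * (1 + c * (t (m+1) * t m)) :=
        Finset.prod_range_succ (fun k => 1 + c * (t (k+1) * t k)) m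
      rw [hsucc]
      ring
  have hQ : ∀ j, S j ≤ t j * R j := by
    intro j
    induction j using Nat.strong_induction_on with
    | _ j ih =>
      calc S j ≤ t j + ∑ k ∈ Finset.range j, t j * t (k+1) * c * S k := hstep j
        _ ≤ t j + ∑ k ∈ Finset.range j, t j * t (k+1) * c * (t k * R k) :=
            add_le_add_right
              (Finset.sum_le_sum fun k hk =>
                mul_le_mul_of_nonneg_left (ih k (Finset.mem_range.mp hk))
                  (mul_nonneg (mul_nonneg (ht0 j) (ht0 (k+1))) hc0)) (t j)
        _ = t j * (1 + ∑ k ∈ Finset.range j, c * (t (k+1) * t k) * R k) := by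
            rw [mul_add, mul_one, Finset.mul_sum]
            congr 1
            exact Finset.sum_congr rfl fun k _ => by ring
        _ = t j * R j := by rw [hR1 j]
  -- bound R by the exponential
  have hRle : ∀ j ∈ Finset.range (n+1), R j ≤ Real.exp (C * αm⁻¹ * ‖z‖) := by
    intro j hj
    have hj' : j ≤ n := Nat.lt_succ_iff.mp (Finset.mem_range.mp hj)
    have step1 : R j ≤ Real.exp (∑ k ∈ Finset.range j, c * (t (k+1) * t k)) := by
      rw [Real.exp_sum]
      exact Finset.prod_le_prod (fun k _ => hfac k)
        (fun k _ => by rw [add_comm]; exact Real.add_one_le_exp _)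
    have step2 : ∑ k ∈ Finset.range j, c * (t (k+1) * t k) ≤ c * (C * ((n:ℝ)+1)) := by
      rw [← Finset.mul_sum]
      apply mul_le_mul_of_nonneg_left _ hc0
      calc ∑ k ∈ Finset.range j, t (k+1) * t k
          ≤ ∑ k ∈ Finset.range n, t (k+1) * t k := by
            apply Finset.sum_le_sum_of_subset_of_nonneg
            · exact Finset.range_subset_range.mpr hj'
            · exact fun k _ _ => mul_nonneg (ht0 _) (ht0 _)
        _ ≤ ∑ k ∈ Finset.range n, (t (k+1)^2 + t k^2) / 2 := by
            apply Finset.sum_le_sum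
            intro k _
            nlinarith [sq_nonneg (t (k+1) - t k)]
        _ = ((∑ k ∈ Finset.range n, t (k+1)^2) + ∑ k ∈ Finset.range n, t k^2) / 2 := by
            rw [← Finset.sum_add_distrib, Finset.sum_div]
        _ ≤ ((∑ k ∈ Finset.range (n+1), t k^2) + ∑ k ∈ Finset.range (n+1), t k^2) / 2 := by
            have hA1 : ∑ k ∈ Finset.range n, t (k+1)^2 ≤ ∑ k ∈ Finset.range (n+1), t k^2 := by
              rw [Finset.sum_range_succ' (fun k => t k ^ 2) n]
              exact le_add_of_nonneg_right (sq_nonneg _)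
            have hA2 : ∑ k ∈ Finset.range n, t k^2 ≤ ∑ k ∈ Finset.range (n+1), t k^2 := by
              rw [Finset.sum_range_succ]
              exact le_add_of_nonneg_right (sq_nonneg _)
            linarith
        _ = ∑ k ∈ Finset.range (n+1), t k^2 := by ring
        _ ≤ C * ((n:ℝ)+1) := hsum
    have heq : c * (C * ((n:ℝ)+1)) = C * αm⁻¹ * ‖z‖ := by
      rw [hc]
      field_simp
    calc R j ≤ Real.exp (∑ k ∈ Finset.range j, c * (t (k+1) * t k)) := step1
      _ ≤ Real.exp (c * (C * ((n:ℝ)+1))) := Real.exp_le_exp.mpr step2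
      _ = Real.exp (C * αm⁻¹ * ‖z‖) := by rw [heq]
  -- conclude
  have hfinal : ∑ j ∈ Finset.range (n+1), S j ^ 2 ≤
      C * ((n:ℝ)+1) * Real.exp (2 * C * αm⁻¹ * ‖z‖) := by
    have hexp2 : Real.exp (C * αm⁻¹ * ‖z‖) ^ 2 = Real.exp (2 * C * αm⁻¹ * ‖z‖) := by
      rw [sq, ← Real.exp_add]; ring_nf
    calc ∑ j ∈ Finset.range (n+1), S j ^ 2
        ≤ ∑ j ∈ Finset.range (n+1), t j ^ 2 * Real.exp (2 * C * αm⁻¹ * ‖z‖) := by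
          apply Finset.sum_le_sum
          intro j hj
          have h1 : S j ≤ t j * Real.exp (C * αm⁻¹ * ‖z‖) :=
            le_trans (hQ j) (mul_le_mul_of_nonneg_left (hRle j hj) (ht0 j))
          calc S j ^ 2 ≤ (t j * Real.exp (C * αm⁻¹ * ‖z‖)) ^ 2 :=
                pow_le_pow_left₀ (hS0 j) h1 2
            _ = t j ^ 2 * Real.exp (2 * C * αm⁻¹ * ‖z‖) := by
                rw [mul_pow, hexp2]
      _ = (∑ j ∈ Finset.range (n+1), t j ^ 2) * Real.exp (2 * C * αm⁻¹ * ‖z‖) := by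
          rw [Finset.sum_mul]
      _ ≤ C * ((n:ℝ)+1) * Real.exp (2 * C * αm⁻¹ * ‖z‖) := by
          apply mul_le_mul_of_nonneg_right hsum (Real.exp_nonneg _)
  calc (1 / ((n:ℝ) + 1)) * ∑ j ∈ Finset.range (n+1), S j ^ 2
      ≤ (1 / ((n:ℝ) + 1)) * (C * ((n:ℝ)+1) * Real.exp (2 * C * αm⁻¹ * ‖z‖)) := by
        apply mul_le_mul_of_nonneg_left hfinal (by positivity)
    _ = C * Real.exp (2 * C * αm⁻¹ * ‖z‖) := by field_simp
end

section
/- (Theorem 3, second part) Fix x₀ ∈ ℝ and suppose sup_n ‖T_n(x₀)‖² = C < ∞. Then for all z ∈ ℂ and all n ≥ 0, ‖T_n(x₀ + z/(n+1))‖ ≤ C^{1/2} exp(C α_-^{−1} |z|). -/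
open scoped Matrix.Norms.L2Operator

namespace ALS
open Matrix

abbrev M2 := Matrix (Fin 2) (Fin 2) ℂ

lemma norm_one' : ‖(1 : M2)‖ = 1 := by
  rw [Matrix.cstar_norm_def, _root_.map_one]
  exact ContinuousLinearMap.norm_id

lemma norm_conj_le (A : M2) : ‖A.map (starRingEnd ℂ)‖ ≤ ‖A‖ := by
  rw [Matrix.l2_opNorm_def]
  refine ContinuousLinearMap.opNorm_le_bound _ (norm_nonneg A) (fun x => ?_)
  set y : EuclideanSpace ℂ (Fin 2) :=
    (WithLp.equiv 2 (Fin 2 → ℂ)).symm (star ((WithLp.equiv 2 (Fin 2 → ℂ)) x)) with hy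
  have hyx : ‖y‖ = ‖x‖ := by
    simp [hy, EuclideanSpace.norm_eq]
  have key : ((Matrix.toEuclideanLin.trans LinearMap.toContinuousLinearMap) (A.map (starRingEnd ℂ))) x
      = (WithLp.equiv 2 (Fin 2 → ℂ)).symm
          (star (A *ᵥ ((WithLp.equiv 2 (Fin 2 → ℂ)) y))) := by
    simp only [LinearEquiv.trans_apply, LinearMap.coe_toContinuousLinearMap',
      Matrix.toEuclideanLin_apply, hy]
    congr 1
    ext i
    fin_cases i <;> simp [Matrix.mulVec, dotProduct, Fin.sum_univ_two, mul_comm]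
  rw [key]
  calc ‖(WithLp.equiv 2 (Fin 2 → ℂ)).symm (star (A *ᵥ ((WithLp.equiv 2 (Fin 2 → ℂ)) y)))‖
      = ‖(WithLp.equiv 2 (Fin 2 → ℂ)).symm (A *ᵥ ((WithLp.equiv 2 (Fin 2 → ℂ)) y))‖ := by
        simp [EuclideanSpace.norm_eq]
    _ ≤ ‖A‖ * ‖y‖ := Matrix.l2_opNorm_mulVec A y
    _ = ‖A‖ * ‖x‖ := by rw [hyx]

end ALS
namespace ALS
open Matrix

lemma norm_conj (A : M2) : ‖A.map (starRingEnd ℂ)‖ = ‖A‖ := by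
  refine le_antisymm (norm_conj_le A) ?_
  have := norm_conj_le (A.map (starRingEnd ℂ))
  rwa [Matrix.map_map, show ((starRingEnd ℂ) : ℂ → ℂ) ∘ (starRingEnd ℂ) = id from funext (fun z => star_star z), Matrix.map_id] at this

lemma norm_transpose (A : M2) : ‖Aᵀ‖ = ‖A‖ := by
  have h : Aᵀ = (Aᴴ).map (starRingEnd ℂ) := by
    ext i j; simp [Matrix.conjTranspose_apply]
  rw [h, norm_conj, Matrix.l2_opNorm_conjTranspose]

def J : M2 := !![0, 1; -1, 0]

lemma J_conj_mul : Jᴴ * J = 1 := by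
  ext i j; fin_cases i <;> fin_cases j <;>
    simp [J, Matrix.mul_apply, Fin.sum_univ_two, Matrix.one_apply]

lemma norm_J : ‖J‖ = 1 := by
  have h := Matrix.l2_opNorm_conjTranspose_mul_self J
  rw [J_conj_mul, norm_one'] at h
  nlinarith [norm_nonneg J]

lemma norm_Jh : ‖Jᴴ‖ = 1 := by rw [Matrix.l2_opNorm_conjTranspose, norm_J]

lemma adjugate_eq (A : M2) : A.adjugate = J * Aᵀ * Jᴴ := by
  rw [Matrix.adjugate_fin_two]
  ext i j; fin_cases i <;> fin_cases j <;>
    simp [J, Matrix.mul_apply, Fin.sum_univ_two, Matrix.vecMul, dotProduct]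

lemma norm_adjugate_le_s10 (A : M2) : ‖A.adjugate‖ ≤ ‖A‖ := by
  rw [adjugate_eq]
  calc ‖J * Aᵀ * Jᴴ‖ ≤ ‖J * Aᵀ‖ * ‖Jᴴ‖ := Matrix.l2_opNorm_mul _ _
    _ ≤ ‖J‖ * ‖Aᵀ‖ * ‖Jᴴ‖ := by
        have := Matrix.l2_opNorm_mul J Aᵀ
        have h2 : (0:ℝ) ≤ ‖Jᴴ‖ := norm_nonneg _
        nlinarith
    _ = ‖A‖ := by rw [norm_J, norm_Jh, norm_transpose]; ring

lemma norm_inv_le (A : M2) (h : A.det = 1) : ‖A⁻¹‖ ≤ ‖A‖ := by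
  rw [Matrix.inv_def, h, Ring.inverse_one, one_smul]
  exact norm_adjugate_le_s10 A

def E : M2 := !![1, 0; 0, 0]

lemma norm_E_le : ‖E‖ ≤ 1 := by
  have h1 : Eᴴ * E = E := by
    ext i j; fin_cases i <;> fin_cases j <;>
      simp [E, Matrix.mul_apply, Fin.sum_univ_two]
  have h := Matrix.l2_opNorm_conjTranspose_mul_self E
  rw [h1] at h
  nlinarith [norm_nonneg E]

end ALS

namespace ALS
open Matrix

lemma det_jacobiA_s10 (a b : ℕ → ℝ) (j : ℕ) (z : ℂ) (ha : a j ≠ 0) :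
    (jacobiA a b j z).det = 1 := by
  have h : (a j : ℂ) ≠ 0 := by exact_mod_cast ha
  rw [jacobiA, Matrix.det_fin_two_of]
  field_simp
  ring

lemma det_transfer_s10 (a b : ℕ → ℝ) (ha : ∀ n : ℕ, 0 < a (n + 1)) (n : ℕ) (z : ℂ) :
    (transfer a b n z).det = 1 := by
  induction n with
  | zero => simp [transfer]
  | succ n ih =>
      rw [transfer, Matrix.det_mul, ih, mul_one,
        det_jacobiA_s10 a b (n + 1) z (ne_of_gt (ha n))]

lemma jacobiA_add (a b : ℕ → ℝ) (j : ℕ) (x w : ℂ) :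
    jacobiA a b j (x + w) = jacobiA a b j x + (w / (a j : ℂ)) • E := by
  ext i k; fin_cases i <;> fin_cases k <;>
    simp [jacobiA, E, add_div, add_sub_right_comm]

lemma duhamel (a b : ℕ → ℝ) (ha : ∀ n : ℕ, 0 < a (n + 1)) (x w : ℂ) (n : ℕ) :
    transfer a b n (x + w) = transfer a b n x +
      ∑ j ∈ Finset.range n,
        transfer a b n x * (transfer a b (j + 1) x)⁻¹ *
          ((w / (a (j + 1) : ℂ)) • (E * transfer a b j (x + w))) := by
  induction n with
  | zero => simp [transfer]
  | succ n ih =>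
      have hinv : transfer a b (n + 1) x * (transfer a b (n + 1) x)⁻¹ = 1 :=
        Matrix.mul_nonsing_inv _ (by rw [det_transfer_s10 a b ha]; exact isUnit_one)
      have hstep : transfer a b (n + 1) (x + w) =
          jacobiA a b (n + 1) (x + w) * transfer a b n (x + w) := rfl
      rw [hstep, jacobiA_add, add_mul, ih, mul_add, Finset.mul_sum,
        Finset.sum_range_succ]
      have h1 : ∀ j, jacobiA a b (n + 1) x *
          (transfer a b n x * (transfer a b (j + 1) x)⁻¹ *
            ((w / (a (j + 1) : ℂ)) • (E * transfer a b j (x + w)))) =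
          transfer a b (n + 1) x * (transfer a b (j + 1) x)⁻¹ *
            ((w / (a (j + 1) : ℂ)) • (E * transfer a b j (x + w))) := by
        intro j
        rw [show transfer a b (n + 1) x = jacobiA a b (n + 1) x * transfer a b n x from rfl]
        noncomm_ring
      have h2 : ((w / (a (n + 1) : ℂ)) • E) * transfer a b n (x + w) =
          transfer a b (n + 1) x * (transfer a b (n + 1) x)⁻¹ *
            ((w / (a (n + 1) : ℂ)) • (E * transfer a b n (x + w))) := by
        rw [hinv, one_mul, smul_mul_assoc]
      simp only [h1]
      rw [← ih, h2,
        show jacobiA a b (n + 1) x * transfer a b n x = transfer a b (n + 1) x from rfl]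
      abel

lemma gronwall (u : ℕ → ℝ) (c K : ℝ) (hc : 0 ≤ c) (hK : 0 ≤ K)
    (hu : ∀ n, u n ≤ c + K * ∑ j ∈ Finset.range n, u j)
    (hunn : ∀ n, 0 ≤ u n) :
    ∀ n, u n ≤ c * (1 + K) ^ n := by
  have key : ∀ n, c + K * ∑ j ∈ Finset.range n, c * (1 + K) ^ j = c * (1 + K) ^ n := by
    intro n
    induction n with
    | zero => simp
    | succ n ih => rw [Finset.sum_range_succ, pow_succ]; ring_nf; ring_nf at ih; linarith
  intro n
  induction n using Nat.strong_induction_on with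
  | _ n IH =>
    calc u n ≤ c + K * ∑ j ∈ Finset.range n, u j := hu n
      _ ≤ c + K * ∑ j ∈ Finset.range n, c * (1 + K) ^ j := by
          have : ∑ j ∈ Finset.range n, u j ≤ ∑ j ∈ Finset.range n, c * (1 + K) ^ j :=
            Finset.sum_le_sum (fun j hj => IH j (Finset.mem_range.mp hj))
          nlinarith
      _ = c * (1 + K) ^ n := key n

end ALS

/-- **Theorem 3, second part** of Avila–Last–Simon: if `C = sup_n ‖T_n(x₀)‖² < ∞`, then for all
`z ∈ ℂ` and all `n`, `‖T_n(x₀ + z/(n+1))‖ ≤ C^{1/2} exp(C α₋⁻¹ |z|)`, where `α₋ = inf_n a_n > 0`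
and `‖·‖` is the Euclidean operator norm. -/
theorem stmt_10 (a b : ℕ → ℝ) (hapos : ∀ n : ℕ, 0 < a (n + 1))
    (αm : ℝ) (hαm_pos : 0 < αm) (hαm : αm = ⨅ n : ℕ, a (n + 1))
    (x₀ : ℝ) (C : ℝ)
    (hbdd : BddAbove (Set.range fun n : ℕ => ‖transfer a b n (x₀ : ℂ)‖ ^ 2))
    (hC : C = ⨆ n : ℕ, ‖transfer a b n (x₀ : ℂ)‖ ^ 2) :
    ∀ (z : ℂ) (n : ℕ),
      ‖transfer a b n ((x₀ : ℂ) + z / (n + 1))‖ ≤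
        Real.sqrt C * Real.exp (C * αm⁻¹ * ‖z‖) := by
  have hsq : ∀ m : ℕ, ‖transfer a b m (x₀ : ℂ)‖ ^ 2 ≤ C := by
    intro m; rw [hC]; exact le_ciSup hbdd m
  have hC0 : 0 ≤ C := le_trans (sq_nonneg _) (hsq 0)
  have hTle : ∀ m : ℕ, ‖transfer a b m (x₀ : ℂ)‖ ≤ Real.sqrt C := by
    intro m
    have := Real.sqrt_le_sqrt (hsq m)
    rwa [Real.sqrt_sq (norm_nonneg _)] at this
  have hαm_le : ∀ j : ℕ, αm ≤ a (j + 1) := by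
    intro j
    rw [hαm]
    exact ciInf_le ⟨0, by rintro x ⟨j, rfl⟩; exact (hapos j).le⟩ j
  intro z n
  set w : ℂ := z / ((n : ℂ) + 1) with hw
  set K : ℝ := C * αm⁻¹ * ‖w‖ with hK
  have hK0 : 0 ≤ K := by
    apply mul_nonneg (mul_nonneg hC0 _) (norm_nonneg _)
    exact inv_nonneg.2 hαm_pos.le
  have hrec : ∀ m : ℕ, ‖transfer a b m ((x₀ : ℂ) + w)‖ ≤
      Real.sqrt C + K * ∑ j ∈ Finset.range m, ‖transfer a b j ((x₀ : ℂ) + w)‖ := by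
    intro m
    rw [ALS.duhamel a b hapos (x₀ : ℂ) w m]
    have hterm : ∀ j : ℕ,
        ‖transfer a b m (x₀ : ℂ) * (transfer a b (j + 1) (x₀ : ℂ))⁻¹ *
          ((w / (a (j + 1) : ℂ)) • (ALS.E * transfer a b j ((x₀ : ℂ) + w)))‖ ≤
        K * ‖transfer a b j ((x₀ : ℂ) + w)‖ := by
      intro j
      have h1 : ‖transfer a b m (x₀ : ℂ) * (transfer a b (j + 1) (x₀ : ℂ))⁻¹‖ ≤
          Real.sqrt C * Real.sqrt C := by
        refine le_trans (Matrix.l2_opNorm_mul _ _) ?_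
        exact mul_le_mul (hTle m)
          (le_trans (ALS.norm_inv_le _ (ALS.det_transfer_s10 a b hapos (j + 1) _)) (hTle (j + 1)))
          (norm_nonneg _) (Real.sqrt_nonneg C)
      have h2 : ‖(w / (a (j + 1) : ℂ)) • (ALS.E * transfer a b j ((x₀ : ℂ) + w))‖ ≤
          (‖w‖ / αm) * ‖transfer a b j ((x₀ : ℂ) + w)‖ := by
        rw [norm_smul]
        have hnc : ‖w / (a (j + 1) : ℂ)‖ = ‖w‖ / a (j + 1) := by
          rw [norm_div, Complex.norm_real, Real.norm_eq_abs, abs_of_pos (hapos j)]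
        rw [hnc]
        have hE : ‖ALS.E * transfer a b j ((x₀ : ℂ) + w)‖ ≤
            ‖transfer a b j ((x₀ : ℂ) + w)‖ := by
          refine le_trans (Matrix.l2_opNorm_mul _ _) ?_
          nlinarith [ALS.norm_E_le, norm_nonneg (transfer a b j ((x₀ : ℂ) + w)),
            norm_nonneg (ALS.E : ALS.M2)]
        have hdd : ‖w‖ / a (j + 1) ≤ ‖w‖ / αm := by
          gcongr
          exact hαm_le j
        exact mul_le_mul hdd hE (norm_nonneg _) (by positivity)
      calc ‖transfer a b m (x₀ : ℂ) * (transfer a b (j + 1) (x₀ : ℂ))⁻¹ *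
            ((w / (a (j + 1) : ℂ)) • (ALS.E * transfer a b j ((x₀ : ℂ) + w)))‖
          ≤ ‖transfer a b m (x₀ : ℂ) * (transfer a b (j + 1) (x₀ : ℂ))⁻¹‖ *
            ‖(w / (a (j + 1) : ℂ)) • (ALS.E * transfer a b j ((x₀ : ℂ) + w))‖ :=
            Matrix.l2_opNorm_mul _ _
        _ ≤ (Real.sqrt C * Real.sqrt C) *
            ((‖w‖ / αm) * ‖transfer a b j ((x₀ : ℂ) + w)‖) :=
            mul_le_mul h1 h2 (norm_nonneg _) (by positivity)
        _ = K * ‖transfer a b j ((x₀ : ℂ) + w)‖ := by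
            rw [Real.mul_self_sqrt hC0, hK]
            field_simp
    refine le_trans (norm_add_le _ _) ?_
    have hsum := le_trans
      (norm_sum_le (Finset.range m) _)
      (Finset.sum_le_sum (fun j _ => hterm j))
    rw [← Finset.mul_sum] at hsum
    exact add_le_add (hTle m) hsum
  have hgron := ALS.gronwall (fun m => ‖transfer a b m ((x₀ : ℂ) + w)‖)
    (Real.sqrt C) K (Real.sqrt_nonneg C) hK0 hrec (fun m => norm_nonneg _) n
  refine le_trans hgron ?_
  have hwn : ‖w‖ = ‖z‖ / ((n : ℝ) + 1) := by
    rw [hw, norm_div]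
    congr 1
    rw [show ((n : ℂ) + 1) = ((n + 1 : ℕ) : ℂ) by push_cast; ring, Complex.norm_natCast]
    push_cast; ring
  have hnK : (n : ℝ) * K ≤ C * αm⁻¹ * ‖z‖ := by
    have hn1 : (0 : ℝ) < (n : ℝ) + 1 := by positivity
    have hfrac : (n : ℝ) / ((n : ℝ) + 1) ≤ 1 := by
      rw [div_le_one hn1]; linarith
    have hP : 0 ≤ C * αm⁻¹ * ‖z‖ := by
      apply mul_nonneg (mul_nonneg hC0 _) (norm_nonneg _)
      exact inv_nonneg.2 hαm_pos.le
    have : (n : ℝ) * K = (C * αm⁻¹ * ‖z‖) * ((n : ℝ) / ((n : ℝ) + 1)) := by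
      rw [hK, hwn]; ring
    rw [this]
    exact mul_le_of_le_one_right hP hfrac
  have hpow : (1 + K) ^ n ≤ Real.exp (C * αm⁻¹ * ‖z‖) := by
    calc (1 + K) ^ n ≤ Real.exp K ^ n := by
          apply pow_le_pow_left₀ (by positivity)
          linarith [Real.add_one_le_exp K]
      _ = Real.exp ((n : ℝ) * K) := (Real.exp_nat_mul K n).symm
      _ ≤ Real.exp (C * αm⁻¹ * ‖z‖) := Real.exp_le_exp.2 hnK
  exact mul_le_mul_of_nonneg_left hpow (Real.sqrt_nonneg C)
end

section
/- (Product perturbation inequality (4.13), abstract form) Let A_1, …, A_n and Ã_1, …, Ã_n be 2×2 complex matrices with det A_k = 1 for every k. Set T_0 = T̃_0 = I, T_j = A_j ⋯ A_1 and T̃_j = Ã_j ⋯ Ã_1 for 1 ≤ j ≤ n. Then for every j ≤ n, ‖T̃_j‖ ≤ ‖T_j‖ · exp( Σ_{k=1}^{j} ‖T_k‖ ‖T_{k−1}‖ ‖Ã_k − A_k‖ ), where ‖·‖ is the operator norm on 2×2 complex matrices. -/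
open scoped Matrix.Norms.L2Operator

section AuxALS
open Matrix
open scoped ComplexConjugate

lemma euclid_norm_star (v : Fin 2 → ℂ) :
    ‖(EuclideanSpace.equiv (Fin 2) ℂ).symm (star v)‖ = ‖(EuclideanSpace.equiv (Fin 2) ℂ).symm v‖ := by
  simp [EuclideanSpace.norm_eq]

lemma norm_transpose_le (M : Matrix (Fin 2) (Fin 2) ℂ) : ‖Mᵀ‖ ≤ ‖M‖ := by
  rw [Matrix.l2_opNorm_def]
  refine ContinuousLinearMap.opNorm_le_bound _ (norm_nonneg M) fun x => ?_
  set u : Fin 2 → ℂ := WithLp.equiv 2 (Fin 2 → ℂ) x with hu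
  have key : Mᵀ *ᵥ u = star (Mᴴ *ᵥ star u) := by
    ext i; fin_cases i <;>
    simp [Matrix.mulVec, dotProduct, Matrix.conjTranspose_apply, mul_comm]
  have h1 : ((Matrix.toEuclideanLin.trans LinearMap.toContinuousLinearMap) Mᵀ) x =
      (EuclideanSpace.equiv (Fin 2) ℂ).symm (Mᵀ *ᵥ u) := rfl
  rw [h1, key, euclid_norm_star]
  have h2 := Matrix.l2_opNorm_mulVec Mᴴ ((EuclideanSpace.equiv (Fin 2) ℂ).symm (star u))
  have h3 : ‖(EuclideanSpace.equiv (Fin 2) ℂ).symm (star u)‖ = ‖x‖ := by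
    rw [euclid_norm_star]; rfl
  rw [Matrix.l2_opNorm_conjTranspose, h3] at h2
  exact h2

lemma norm_inv_le (M : Matrix (Fin 2) (Fin 2) ℂ) (h : M.det = 1) : ‖M⁻¹‖ ≤ ‖M‖ := by
  set J : Matrix (Fin 2) (Fin 2) ℂ := !![0, 1; -1, 0] with hJdef
  have hnorm1 : ‖(1 : Matrix (Fin 2) (Fin 2) ℂ)‖ = 1 := norm_one
  have hJu : Jᴴ * J = 1 := by
    ext i j; fin_cases i <;> fin_cases j <;>
      simp [hJdef, Matrix.mul_apply, Matrix.transpose_apply, Fin.sum_univ_two, Matrix.conjTranspose_apply, Matrix.vecHead, Matrix.vecTail, Matrix.one_apply]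
  have hJn : ‖J‖ = 1 := by
    have h2 : ‖J‖ * ‖J‖ = 1 := by rw [← Matrix.l2_opNorm_conjTranspose_mul_self, hJu, hnorm1]
    nlinarith [norm_nonneg J]
  have hJtu : Jᵀᴴ * Jᵀ = 1 := by
    ext i j; fin_cases i <;> fin_cases j <;>
      simp [hJdef, Matrix.mul_apply, Matrix.transpose_apply, Fin.sum_univ_two, Matrix.conjTranspose_apply, Matrix.vecHead, Matrix.vecTail, Matrix.one_apply]
  have hJtn : ‖Jᵀ‖ = 1 := by
    have h2 : ‖Jᵀ‖ * ‖Jᵀ‖ = 1 := by rw [← Matrix.l2_opNorm_conjTranspose_mul_self, hJtu, hnorm1]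
    nlinarith [norm_nonneg Jᵀ]
  have hadj : M⁻¹ = J * Mᵀ * Jᵀ := by
    rw [Matrix.inv_def, h, Matrix.adjugate_fin_two]
    ext i j; fin_cases i <;> fin_cases j <;>
      simp [hJdef, Matrix.mul_apply, Matrix.transpose_apply, Fin.sum_univ_two, Matrix.vecHead, Matrix.vecTail, Matrix.vecMul, dotProduct]
  calc ‖M⁻¹‖ = ‖J * Mᵀ * Jᵀ‖ := by rw [hadj]
    _ ≤ ‖J * Mᵀ‖ * ‖Jᵀ‖ := Matrix.l2_opNorm_mul _ _
    _ ≤ ‖J‖ * ‖Mᵀ‖ * ‖Jᵀ‖ := by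
        have := Matrix.l2_opNorm_mul J Mᵀ
        nlinarith [norm_nonneg Jᵀ, norm_nonneg (J * Mᵀ)]
    _ = ‖Mᵀ‖ := by rw [hJn, hJtn]; ring
    _ ≤ ‖M‖ := norm_transpose_le M

lemma gron (d : ℕ → ℝ) (hd : ∀ k, 0 ≤ d k) : ∀ j : ℕ,
    1 + ∑ k ∈ Finset.range j, d k * Real.exp (∑ i ∈ Finset.range k, d i) ≤
      Real.exp (∑ k ∈ Finset.range j, d k) := by
  intro j
  induction j with
  | zero => simp
  | succ j ih =>
    rw [Finset.sum_range_succ, Finset.sum_range_succ, ← add_assoc, Real.exp_add]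
    calc 1 + ∑ k ∈ Finset.range j, d k * Real.exp (∑ i ∈ Finset.range k, d i) +
          d j * Real.exp (∑ i ∈ Finset.range j, d i)
        ≤ Real.exp (∑ k ∈ Finset.range j, d k) + d j * Real.exp (∑ i ∈ Finset.range j, d i) := by
          linarith
      _ = (1 + d j) * Real.exp (∑ k ∈ Finset.range j, d k) := by ring
      _ ≤ Real.exp (∑ k ∈ Finset.range j, d k) * Real.exp (d j) := by
          rw [mul_comm]
          have h1 : (1 : ℝ) + d j ≤ Real.exp (d j) := by
            have := Real.add_one_le_exp (d j); linarith
          exact mul_le_mul_of_nonneg_left (by linarith) (Real.exp_nonneg _)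

theorem aux_stmt_11 (n : ℕ) (A A' : ℕ → Matrix (Fin 2) (Fin 2) ℂ)
    (hdet : ∀ k : ℕ, 1 ≤ k → k ≤ n → (A k).det = 1)
    (T T' : ℕ → Matrix (Fin 2) (Fin 2) ℂ)
    (hT0 : T 0 = 1) (hT'0 : T' 0 = 1)
    (hT : ∀ k : ℕ, k < n → T (k + 1) = A (k + 1) * T k)
    (hT' : ∀ k : ℕ, k < n → T' (k + 1) = A' (k + 1) * T' k) :
    ∀ j : ℕ, j ≤ n →
      ‖T' j‖ ≤ ‖T j‖ *
        Real.exp (∑ k ∈ Finset.range j, ‖T (k + 1)‖ * ‖T k‖ * ‖A' (k + 1) - A (k + 1)‖) := by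
  have hdetT : ∀ j, j ≤ n → (T j).det = 1 := by
    intro j
    induction j with
    | zero => intro _; simp [hT0]
    | succ j ih =>
      intro hj
      rw [hT j (by omega), Matrix.det_mul, hdet (j + 1) (by omega) hj, ih (by omega), one_mul]
  have hident : ∀ j, j ≤ n → T' j = T j +
      ∑ k ∈ Finset.range j, T j * (T (k + 1))⁻¹ * (A' (k + 1) - A (k + 1)) * T' k := by
    intro j
    induction j with
    | zero => intro _; simp [hT0, hT'0]
    | succ j ih =>
      intro hj
      have hjn : j < n := by omega
      have hmul : T (j + 1) * (T (j + 1))⁻¹ = 1 :=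
        Matrix.mul_nonsing_inv _ (by rw [hdetT (j + 1) hj]; exact isUnit_one)
      calc T' (j + 1) = A' (j + 1) * T' j := hT' j hjn
        _ = A (j + 1) * T' j + (A' (j + 1) - A (j + 1)) * T' j := by
            rw [sub_mul]; abel
        _ = A (j + 1) * (T j + ∑ k ∈ Finset.range j,
              T j * (T (k + 1))⁻¹ * (A' (k + 1) - A (k + 1)) * T' k) +
            (A' (j + 1) - A (j + 1)) * T' j := by
            nth_rewrite 1 [ih hjn.le]; rfl
        _ = T (j + 1) + (∑ k ∈ Finset.range j,
              T (j + 1) * (T (k + 1))⁻¹ * (A' (k + 1) - A (k + 1)) * T' k +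
              T (j + 1) * (T (j + 1))⁻¹ * (A' (j + 1) - A (j + 1)) * T' j) := by
            rw [mul_add, Finset.mul_sum, hmul, one_mul, ← hT j hjn, add_assoc]
            congr 1
            congr 1
            refine Finset.sum_congr rfl fun k _ => ?_
            rw [hT j hjn]
            noncomm_ring
        _ = T (j + 1) + ∑ k ∈ Finset.range (j + 1),
              T (j + 1) * (T (k + 1))⁻¹ * (A' (k + 1) - A (k + 1)) * T' k := by
            rw [Finset.sum_range_succ]
  have hbound : ∀ j, j ≤ n → ‖T' j‖ ≤ ‖T j‖ +
      ∑ k ∈ Finset.range j, ‖T j‖ * ‖T (k + 1)‖ * ‖A' (k + 1) - A (k + 1)‖ * ‖T' k‖ := by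
    intro j hj
    rw [hident j hj]
    refine (norm_add_le _ _).trans (add_le_add_right ?_ _)
    refine (norm_sum_le _ _).trans (Finset.sum_le_sum fun k hk => ?_)
    have h1 : ‖T j * (T (k + 1))⁻¹ * (A' (k + 1) - A (k + 1)) * T' k‖ ≤
        ‖T j‖ * ‖(T (k + 1))⁻¹‖ * ‖A' (k + 1) - A (k + 1)‖ * ‖T' k‖ := by
      calc ‖T j * (T (k + 1))⁻¹ * (A' (k + 1) - A (k + 1)) * T' k‖
          ≤ ‖T j * (T (k + 1))⁻¹ * (A' (k + 1) - A (k + 1))‖ * ‖T' k‖ := norm_mul_le _ _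
        _ ≤ ‖T j * (T (k + 1))⁻¹‖ * ‖A' (k + 1) - A (k + 1)‖ * ‖T' k‖ := by
            gcongr; exact norm_mul_le _ _
        _ ≤ ‖T j‖ * ‖(T (k + 1))⁻¹‖ * ‖A' (k + 1) - A (k + 1)‖ * ‖T' k‖ := by
            gcongr; exact norm_mul_le _ _
    refine h1.trans ?_
    have h2 : ‖(T (k + 1))⁻¹‖ ≤ ‖T (k + 1)‖ := by
      refine norm_inv_le _ (hdetT (k + 1) ?_)
      have := Finset.mem_range.mp hk; omega
    gcongr
  intro j
  induction j using Nat.strong_induction_on with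
  | _ j ih =>
    intro hjn
    set d : ℕ → ℝ := fun k => ‖T (k + 1)‖ * ‖T k‖ * ‖A' (k + 1) - A (k + 1)‖ with hd
    have hdpos : ∀ k, 0 ≤ d k := fun k => by positivity
    calc ‖T' j‖ ≤ ‖T j‖ +
        ∑ k ∈ Finset.range j, ‖T j‖ * ‖T (k + 1)‖ * ‖A' (k + 1) - A (k + 1)‖ * ‖T' k‖ :=
          hbound j hjn
      _ ≤ ‖T j‖ + ∑ k ∈ Finset.range j, ‖T j‖ * ‖T (k + 1)‖ * ‖A' (k + 1) - A (k + 1)‖ *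
            (‖T k‖ * Real.exp (∑ i ∈ Finset.range k, d i)) := by
          refine add_le_add_right (Finset.sum_le_sum fun k hk => ?_) _
          have hk' := Finset.mem_range.mp hk
          have hih := ih k hk' (by omega)
          have hnn : (0:ℝ) ≤ ‖T j‖ * ‖T (k + 1)‖ * ‖A' (k + 1) - A (k + 1)‖ := by positivity
          exact mul_le_mul_of_nonneg_left hih hnn
      _ = ‖T j‖ * (1 + ∑ k ∈ Finset.range j, d k * Real.exp (∑ i ∈ Finset.range k, d i)) := by
          rw [mul_add, mul_one, Finset.mul_sum]
          congr 1
          refine Finset.sum_congr rfl fun k _ => ?_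
          simp only [hd]; ring
      _ ≤ ‖T j‖ * Real.exp (∑ k ∈ Finset.range j, d k) :=
          mul_le_mul_of_nonneg_left (gron d hdpos j) (norm_nonneg _)

end AuxALS

/-- **Product perturbation inequality (4.13)** of Avila–Last–Simon, abstract form.  If
`A_1, …, A_n` are `2 × 2` complex matrices of determinant one, `Ã_1, …, Ã_n` arbitrary,
`T_j = A_j ⋯ A_1`, `T̃_j = Ã_j ⋯ Ã_1` (with `T_0 = T̃_0 = I`), then
`‖T̃_j‖ ≤ ‖T_j‖ exp(Σ_{k=1}^{j} ‖T_k‖ ‖T_{k-1}‖ ‖Ã_k - A_k‖)` for every `j ≤ n`, where `‖·‖`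
is the Euclidean operator norm. -/
theorem stmt_11 (n : ℕ) (A A' : ℕ → Matrix (Fin 2) (Fin 2) ℂ)
    (hdet : ∀ k : ℕ, 1 ≤ k → k ≤ n → (A k).det = 1)
    (T T' : ℕ → Matrix (Fin 2) (Fin 2) ℂ)
    (hT0 : T 0 = 1) (hT'0 : T' 0 = 1)
    (hT : ∀ k : ℕ, k < n → T (k + 1) = A (k + 1) * T k)
    (hT' : ∀ k : ℕ, k < n → T' (k + 1) = A' (k + 1) * T' k) :
    ∀ j : ℕ, j ≤ n →
      ‖T' j‖ ≤ ‖T j‖ *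
        Real.exp (∑ k ∈ Finset.range j, ‖T (k + 1)‖ * ‖T k‖ * ‖A' (k + 1) - A (k + 1)‖) := by
  exact aux_stmt_11 n A A' hdet T T' hT0 hT'0 hT hT'
end

section
/- (Lemma 5.5, abstract form) Assume additionally that S is ergodic with respect to η. Then for every L < ∞ and every ε > 0 there is K < ∞ such that for η-a.e. ω with ‖V_0(ω)‖ < L and every 2×2 complex matrix C with ‖C‖ < L, one has limsup_{n→∞} (1/n) Σ_{0 ≤ j ≤ n−1, ‖T_j(ω)C‖ ≥ K} ‖T_j(ω)C‖² ≤ ε. -/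
open MeasureTheory Filter
open scoped Matrix.Norms.L2Operator

noncomputable instance : MeasurableSpace (Matrix (Fin 2) (Fin 2) ℂ) := borel _

instance : BorelSpace (Matrix (Fin 2) (Fin 2) ℂ) := ⟨rfl⟩

open scoped ENNReal NNReal

/-! ### Elementary `2 × 2` matrix norm estimates -/

lemma ALS_euclid_coord_le_norm (y : EuclideanSpace ℂ (Fin 2)) (i : Fin 2) : ‖y i‖ ≤ ‖y‖ := by
  rw [EuclideanSpace.norm_eq]
  have h : ‖y i‖ = Real.sqrt (‖y i‖^2) := by rw [Real.sqrt_sq (norm_nonneg _)]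
  rw [h]
  exact Real.sqrt_le_sqrt (Finset.single_le_sum (f := fun j => ‖y j‖^2) (fun j _ => sq_nonneg _)
    (Finset.mem_univ i))

lemma ALS_euclid_norm_le (y : EuclideanSpace ℂ (Fin 2)) : ‖y‖ ≤ ‖y 0‖ + ‖y 1‖ := by
  rw [EuclideanSpace.norm_eq]
  have h : ∑ j, ‖y j‖^2 = ‖y 0‖^2 + ‖y 1‖^2 := by simp [Fin.sum_univ_two]
  rw [h]
  have h2 : ‖y 0‖^2 + ‖y 1‖^2 ≤ (‖y 0‖ + ‖y 1‖)^2 := by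
    nlinarith [norm_nonneg (y 0), norm_nonneg (y 1)]
  calc Real.sqrt (‖y 0‖^2 + ‖y 1‖^2) ≤ Real.sqrt ((‖y 0‖ + ‖y 1‖)^2) := Real.sqrt_le_sqrt h2
    _ = ‖y 0‖ + ‖y 1‖ := Real.sqrt_sq (by positivity)

lemma ALS_entry_le_norm (A : Matrix (Fin 2) (Fin 2) ℂ) (i j : Fin 2) : ‖A i j‖ ≤ ‖A‖ := by
  have h := Matrix.l2_opNorm_mulVec A (EuclideanSpace.single j 1)
  have hx : ‖(EuclideanSpace.single j (1:ℂ))‖ = 1 := by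
    rw [EuclideanSpace.norm_single]; simp
  rw [hx, mul_one] at h
  refine le_trans ?_ (le_trans (ALS_euclid_coord_le_norm _ i) h)
  have he : ((EuclideanSpace.equiv (Fin 2) ℂ).symm (A.mulVec (EuclideanSpace.single j 1))) i
      = A i j := by
    show (A.mulVec (Pi.single j 1)) i = A i j
    simp
  rw [he]

lemma ALS_norm_le_sum_entries (A : Matrix (Fin 2) (Fin 2) ℂ) :
    ‖A‖ ≤ ‖A 0 0‖ + ‖A 0 1‖ + ‖A 1 0‖ + ‖A 1 1‖ := by
  rw [Matrix.l2_opNorm_def]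
  apply ContinuousLinearMap.opNorm_le_bound _ (by positivity)
  intro x
  have hcoord : ∀ i : Fin 2, ((Matrix.toEuclideanLin.trans LinearMap.toContinuousLinearMap A) x) i
      = A i 0 * x 0 + A i 1 * x 1 := by
    intro i
    show (A.mulVec x) i = _
    simp [Matrix.mulVec, dotProduct, Fin.sum_univ_two]
  refine le_trans (ALS_euclid_norm_le _) ?_
  rw [hcoord 0, hcoord 1]
  have h0 := ALS_euclid_coord_le_norm x 0
  have h1 := ALS_euclid_coord_le_norm x 1
  calc ‖A 0 0 * x 0 + A 0 1 * x 1‖ + ‖A 1 0 * x 0 + A 1 1 * x 1‖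
      ≤ (‖A 0 0‖ * ‖x 0‖ + ‖A 0 1‖ * ‖x 1‖) + (‖A 1 0‖ * ‖x 0‖ + ‖A 1 1‖ * ‖x 1‖) := by
        refine add_le_add ?_ ?_ <;>
          exact (norm_add_le _ _).trans (le_of_eq (by rw [norm_mul, norm_mul]))
    _ ≤ (‖A 0 0‖ * ‖x‖ + ‖A 0 1‖ * ‖x‖) + (‖A 1 0‖ * ‖x‖ + ‖A 1 1‖ * ‖x‖) := by gcongr
    _ = (‖A 0 0‖ + ‖A 0 1‖ + ‖A 1 0‖ + ‖A 1 1‖) * ‖x‖ := by ring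

lemma ALS_inv_norm_le (A : Matrix (Fin 2) (Fin 2) ℂ) (h : A.det = 1) : ‖A⁻¹‖ ≤ 4 * ‖A‖ := by
  have hinv : A⁻¹ = A.adjugate := by
    rw [Matrix.inv_def, h]; simp
  rw [hinv, Matrix.adjugate_fin_two]
  refine le_trans (ALS_norm_le_sum_entries _) ?_
  have e00 : (!![A 1 1, -A 0 1; -A 1 0, A 0 0] : Matrix (Fin 2) (Fin 2) ℂ) 0 0 = A 1 1 := rfl
  have e01 : (!![A 1 1, -A 0 1; -A 1 0, A 0 0] : Matrix (Fin 2) (Fin 2) ℂ) 0 1 = -A 0 1 := rfl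
  have e10 : (!![A 1 1, -A 0 1; -A 1 0, A 0 0] : Matrix (Fin 2) (Fin 2) ℂ) 1 0 = -A 1 0 := rfl
  have e11 : (!![A 1 1, -A 0 1; -A 1 0, A 0 0] : Matrix (Fin 2) (Fin 2) ℂ) 1 1 = A 0 0 := rfl
  rw [e00, e01, e10, e11, norm_neg, norm_neg]
  have := ALS_entry_le_norm A 0 0
  have := ALS_entry_le_norm A 0 1
  have := ALS_entry_le_norm A 1 0
  have := ALS_entry_le_norm A 1 1
  linarith

/-! ### Maximal ergodic theory -/

section ErgodicMax
variable {Ω : Type*} [MeasurableSpace Ω] {η : Measure Ω} [IsProbabilityMeasure η]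
  {S : Ω → Ω} {g : Ω → ℝ}

/-- Running maximum of Birkhoff sums. -/
noncomputable def ALSPhi (S : Ω → Ω) (g : Ω → ℝ) : ℕ → Ω → ℝ
  | 0 => fun _ => 0
  | (N+1) => fun ω => max (ALSPhi S g N ω) (birkhoffSum S g (N+1) ω)

omit [MeasurableSpace Ω] in
lemma ALSPhi_nonneg (N : ℕ) (ω : Ω) : 0 ≤ ALSPhi S g N ω := by
  induction N with
  | zero => exact le_refl _
  | succ N ih => exact le_trans ih (le_max_left _ _)

omit [MeasurableSpace Ω] in
lemma birkhoffSum_le_ALSPhi {k N : ℕ} (hk : k ≤ N) (ω : Ω) :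
    birkhoffSum S g k ω ≤ ALSPhi S g N ω := by
  induction N with
  | zero =>
    interval_cases k
    simp [ALSPhi, birkhoffSum]
  | succ N ih =>
    rcases Nat.lt_succ_iff_lt_or_eq.mp (Nat.lt_succ_of_le hk) with h | h
    · exact le_trans (ih (Nat.lt_succ_iff.mp h)) (le_max_left _ _)
    · subst h; exact le_max_right _ _

omit [MeasurableSpace Ω] in
lemma ALSPhi_mono (N : ℕ) (ω : Ω) : ALSPhi S g N ω ≤ ALSPhi S g (N+1) ω := le_max_left _ _

lemma ALSPhi_measurable (hS : Measurable S) (hg : Measurable g) (N : ℕ) :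
    Measurable (ALSPhi S g N) := by
  induction N with
  | zero => exact measurable_const
  | succ N ih =>
    exact ih.max (Finset.measurable_sum _ fun j _ => hg.comp (hS.iterate j))

lemma ALSPhi_integrable (hS : MeasurePreserving S η η) (hg : Integrable g η) (N : ℕ) :
    Integrable (ALSPhi S g N) η := by
  induction N with
  | zero => exact integrable_const 0
  | succ N ih =>
    refine ih.sup (integrable_finset_sum _ fun j _ => ?_)
    exact ((hS.iterate j).integrable_comp hg.aestronglyMeasurable).mpr hg

omit [MeasurableSpace Ω] in
lemma ALSPhi_le (N : ℕ) (ω : Ω) :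
    ALSPhi S g N ω ≤ max 0 (g ω + ALSPhi S g N (S ω)) := by
  induction N with
  | zero => simp [ALSPhi]
  | succ N ih =>
    refine max_le ?_ ?_
    · exact le_trans ih (max_le_max le_rfl (by gcongr; exact ALSPhi_mono N (S ω)))
    · rw [birkhoffSum_succ']
      refine le_trans ?_ (le_max_right _ _)
      gcongr
      exact birkhoffSum_le_ALSPhi (Nat.le_succ N) (S ω)

/-- Garsia's maximal ergodic lemma. -/
lemma ALS_garsia (hS : MeasurePreserving S η η) (hgm : Measurable g) (hgi : Integrable g η)
    (N : ℕ) : 0 ≤ ∫ ω in {ω | 0 < ALSPhi S g N ω}, g ω ∂η := by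
  set E : Set Ω := {ω | 0 < ALSPhi S g N ω} with hE
  have hEm : MeasurableSet E :=
    measurableSet_lt measurable_const (ALSPhi_measurable hS.measurable hgm N)
  have hkey : ∀ ω, ALSPhi S g N ω - ALSPhi S g N (S ω) ≤ E.indicator g ω := by
    intro ω
    rcases lt_or_ge 0 (ALSPhi S g N ω) with hpos | hnp
    · have hind : E.indicator g ω = g ω := Set.indicator_of_mem (show ω ∈ E from hpos) g
      rw [hind]
      rcases le_max_iff.mp (ALSPhi_le N ω) with h0 | h1
      · linarith
      · linarith
    · have h0 : ALSPhi S g N ω = 0 := le_antisymm hnp (ALSPhi_nonneg N ω)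
      have hind : E.indicator g ω = 0 := Set.indicator_of_notMem (by simp [hE]; linarith) g
      rw [hind, h0]
      have := ALSPhi_nonneg (S := S) (g := g) N (S ω)
      linarith
  have hΦi : Integrable (ALSPhi S g N) η := ALSPhi_integrable hS hgi N
  have hΦSi : Integrable (fun ω => ALSPhi S g N (S ω)) η :=
    (hS.integrable_comp hΦi.aestronglyMeasurable).mpr hΦi
  have hIi : Integrable (E.indicator g) η := hgi.indicator hEm
  have hint : ∫ ω, (ALSPhi S g N ω - ALSPhi S g N (S ω)) ∂η ≤ ∫ ω, E.indicator g ω ∂η :=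
    integral_mono (hΦi.sub hΦSi) hIi hkey
  have hcomp : ∫ ω, ALSPhi S g N (S ω) ∂η = ∫ ω, ALSPhi S g N ω ∂η := by
    conv_rhs => rw [← hS.map_eq]
    exact (integral_map hS.measurable.aemeasurable
      (by rw [hS.map_eq]; exact hΦi.aestronglyMeasurable)).symm
  rw [integral_sub hΦi hΦSi, hcomp, sub_self, integral_indicator hEm] at hint
  exact hint

omit [MeasurableSpace Ω] in
lemma ALSPhi_pos_exists {N : ℕ} {ω : Ω} (h : 0 < ALSPhi S g N ω) :
    ∃ k, 1 ≤ k ∧ k ≤ N ∧ 0 < birkhoffSum S g k ω := by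
  induction N with
  | zero => simp [ALSPhi] at h
  | succ N ih =>
    rcases lt_max_iff.mp h with h1 | h2
    · obtain ⟨k, hk1, hk2, hk3⟩ := ih h1
      exact ⟨k, hk1, hk2.trans (Nat.le_succ N), hk3⟩
    · exact ⟨N+1, Nat.succ_le_succ (Nat.zero_le N), le_refl _, h2⟩

lemma ALS_maximal_lt_one (hS : MeasurePreserving S η η) (hgm : Measurable g)
    (hgi : Integrable g η) (hg0 : ∀ ω, 0 ≤ g ω) {α : ℝ} (hα : 0 < α)
    (hint : ∫ ω, g ω ∂η < α) :
    η {ω | ∃ n : ℕ, 1 ≤ n ∧ α * n < birkhoffSum S g n ω} < 1 := by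
  set g' : Ω → ℝ := fun ω => g ω - α with hg'
  have hg'm : Measurable g' := hgm.sub measurable_const
  have hg'i : Integrable g' η := hgi.sub (integrable_const α)
  have hsub : ∀ (k : ℕ) (ω : Ω), birkhoffSum S g' k ω = birkhoffSum S g k ω - k * α := by
    intro k ω
    simp only [birkhoffSum, hg', Finset.sum_sub_distrib, Finset.sum_const, Finset.card_range,
      nsmul_eq_mul]
  set E : ℕ → Set Ω := fun N => {ω | 0 < ALSPhi S g' N ω} with hE
  set A : Set Ω := {ω | ∃ n : ℕ, 1 ≤ n ∧ α * n < birkhoffSum S g n ω} with hA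
  have hAE : A = ⋃ N, E N := by
    ext ω
    simp only [hA, hE, Set.mem_setOf_eq, Set.mem_iUnion]
    constructor
    · rintro ⟨n, hn1, hn2⟩
      refine ⟨n, lt_of_lt_of_le ?_ (birkhoffSum_le_ALSPhi le_rfl ω)⟩
      rw [hsub]; linarith
    · rintro ⟨N, hN⟩
      obtain ⟨k, hk1, hk2, hk3⟩ := ALSPhi_pos_exists hN
      rw [hsub] at hk3
      exact ⟨k, hk1, by linarith⟩
  have hPhimono : ∀ (m n : ℕ), m ≤ n → ∀ ω : Ω, ALSPhi S g' m ω ≤ ALSPhi S g' n ω := by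
    intro m n hmn ω
    induction n with
    | zero => simp at hmn; simp [hmn]
    | succ n ih =>
      rcases Nat.lt_succ_iff_lt_or_eq.mp (Nat.lt_succ_of_le hmn) with h | h
      · exact le_trans (ih (Nat.lt_succ_iff.mp h)) (le_max_left _ _)
      · subst h; exact le_refl _
  have hmono : Monotone E := fun m n hmn ω hω => lt_of_lt_of_le hω (hPhimono m n hmn ω)
  have hbound : ∀ N, η (E N) ≤ ENNReal.ofReal ((∫ ω, g ω ∂η) / α) := by
    intro N
    have hg0' : 0 ≤ ∫ ω in E N, g' ω ∂η := ALS_garsia hS hg'm hg'i N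
    have hEm : MeasurableSet (E N) :=
      measurableSet_lt measurable_const (ALSPhi_measurable hS.measurable hg'm N)
    have hsplit : ∫ ω in E N, g' ω ∂η = ∫ ω in E N, g ω ∂η - α * (η (E N)).toReal := by
      rw [hg']
      rw [integral_sub (hgi.restrict) (integrable_const α)]
      rw [setIntegral_const]
      simp [mul_comm]
      exact Or.inl rfl
    have hle : ∫ ω in E N, g ω ∂η ≤ ∫ ω, g ω ∂η :=
      setIntegral_le_integral hgi (Filter.Eventually.of_forall hg0)
    have htr : α * (η (E N)).toReal ≤ ∫ ω, g ω ∂η := by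
      rw [hsplit] at hg0'; linarith
    rw [ENNReal.le_ofReal_iff_toReal_le (measure_ne_top η _) ?hnn]
    · rw [le_div_iff₀ hα]; linarith
    · exact div_nonneg (le_trans (by positivity) htr) hα.le
  have htend : Filter.Tendsto (fun N => η (E N)) atTop (nhds (η (⋃ N, E N))) :=
    tendsto_measure_iUnion_atTop hmono
  have hle : η A ≤ ENNReal.ofReal ((∫ ω, g ω ∂η) / α) := by
    rw [hAE]
    exact le_of_tendsto htend (Filter.Eventually.of_forall hbound)
  refine lt_of_le_of_lt hle ?_
  rw [ENNReal.ofReal_lt_one]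
  rw [div_lt_one hα]
  exact hint

lemma ALS_ae_eq_comp_of_le (hS : MeasurePreserving S η η) {h : Ω → ℝ≥0∞} (hm : Measurable h)
    (hle : ∀ ω, h ω ≤ h (S ω)) : (fun ω => h (S ω)) =ᵐ[η] h := by
  have hq : ∀ q : ℚ, η ({ω | ((q:ℝ).toNNReal : ℝ≥0∞) < h (S ω)} \
      {ω | ((q:ℝ).toNNReal : ℝ≥0∞) < h ω}) = 0 := by
    intro q
    set c : ℝ≥0∞ := ((q:ℝ).toNNReal : ℝ≥0∞)
    have hU : MeasurableSet {ω | c < h ω} := measurableSet_lt measurable_const hm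
    have hTU : {ω | c < h ω} ⊆ {ω | c < h (S ω)} := fun ω hω => lt_of_lt_of_le hω (hle ω)
    have hTeq : {ω | c < h (S ω)} = S ⁻¹' {ω | c < h ω} := rfl
    have hmeas : η {ω | c < h (S ω)} = η {ω | c < h ω} := by
      rw [hTeq]; exact hS.measure_preimage hU.nullMeasurableSet
    rw [measure_diff hTU hU.nullMeasurableSet (measure_ne_top η _), hmeas, tsub_self]
  have hsub : {ω | ¬ (h (S ω) = h ω)} ⊆ ⋃ q : ℚ, ({ω | ((q:ℝ).toNNReal : ℝ≥0∞) < h (S ω)} \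
      {ω | ((q:ℝ).toNNReal : ℝ≥0∞) < h ω}) := by
    intro ω hω
    have hlt : h ω < h (S ω) := lt_of_le_of_ne (hle ω) (fun hc => hω hc.symm)
    obtain ⟨q, _, hq1, hq2⟩ := ENNReal.lt_iff_exists_rat_btwn.mp hlt
    exact Set.mem_iUnion.mpr ⟨q, hq2, not_lt.mpr hq1.le⟩
  exact measure_mono_null hsub (measure_iUnion_null hq)

lemma ALS_ae_limsup_birkhoff_le (hS : MeasurePreserving S η η) (hErg : Ergodic S η)
    (hgm : Measurable g) (hgi : Integrable g η) (hg0 : ∀ ω, 0 ≤ g ω) {α : ℝ}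
    (hα : 0 < α) (hint : ∫ ω, g ω ∂η < α) :
    ∀ᵐ ω ∂η, Filter.limsup (fun n => ENNReal.ofReal (birkhoffSum S g n ω / n)) atTop
      ≤ ENNReal.ofReal α := by
  have hB0 : ∀ (n : ℕ) (ω : Ω), 0 ≤ birkhoffSum S g n ω := fun n ω =>
    Finset.sum_nonneg fun j _ => hg0 _
  set h : Ω → ℝ≥0∞ :=
    fun ω => Filter.limsup (fun n => ENNReal.ofReal (birkhoffSum S g n ω / n)) atTop with hh
  have hm : Measurable h := by
    apply Measurable.limsup
    intro n
    exact ENNReal.measurable_ofReal.comp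
      ((Finset.measurable_sum _ fun j _ => hgm.comp (hS.measurable.iterate j)).div_const _)
  have hle : ∀ ω, h ω ≤ h (S ω) := by
    intro ω
    have key : ∀ n : ℕ, ENNReal.ofReal (birkhoffSum S g (n+1) ω / ((n+1 : ℕ) : ℝ))
        ≤ ENNReal.ofReal (g ω / ((n+1 : ℕ) : ℝ))
          + ENNReal.ofReal (birkhoffSum S g n (S ω) / (n : ℝ)) := by
      intro n
      rw [← ENNReal.ofReal_add (div_nonneg (hg0 ω) (by positivity))
        (div_nonneg (hB0 n (S ω)) (Nat.cast_nonneg n))]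
      apply ENNReal.ofReal_le_ofReal
      rw [birkhoffSum_succ', add_div]
      rcases Nat.eq_zero_or_pos n with h0 | hpos
      · subst h0; simp [birkhoffSum]
      · refine add_le_add_right ?_ _
        refine div_le_div_of_nonneg_left (hB0 n (S ω)) ?_ ?_
        · exact_mod_cast hpos
        · exact_mod_cast Nat.le_succ n
    have hshift : h ω
        = Filter.limsup
            (fun n => ENNReal.ofReal (birkhoffSum S g (n+1) ω / ((n+1 : ℕ) : ℝ))) atTop := by
      rw [hh]
      exact (Filter.limsup_nat_add (fun n => ENNReal.ofReal (birkhoffSum S g n ω / n)) 1).symm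
    rcases eq_top_or_lt_top (h (S ω)) with htop | hfin
    · rw [htop]; exact le_top
    refine ENNReal.le_of_forall_pos_le_add fun ε hε _ => ?_
    rw [hshift]
    have htend : Filter.Tendsto (fun n : ℕ => g ω / ((n+1 : ℕ) : ℝ)) atTop (nhds 0) :=
      (tendsto_const_div_atTop_nhds_zero_nat (g ω)).comp
        (Filter.tendsto_add_atTop_nat 1)
    have hev : ∀ᶠ n : ℕ in atTop, ENNReal.ofReal (g ω / ((n+1 : ℕ) : ℝ)) ≤ (ε : ℝ≥0∞) := by
      filter_upwards [htend.eventually_le_const (show (0:ℝ) < ε from hε)] with n hn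
      exact le_trans (ENNReal.ofReal_le_ofReal hn) (le_of_eq ENNReal.ofReal_coe_nnreal)
    calc Filter.limsup (fun n => ENNReal.ofReal (birkhoffSum S g (n+1) ω / ((n+1 : ℕ) : ℝ))) atTop
        ≤ Filter.limsup (fun n => (ε : ℝ≥0∞)
            + ENNReal.ofReal (birkhoffSum S g n (S ω) / (n : ℝ))) atTop := by
          refine Filter.limsup_le_limsup ?_ ?_ ?_
          · filter_upwards [hev] with n hn
            exact le_trans (key n) (add_le_add_left hn _)
          · exact Filter.isCobounded_le_of_bot
          · exact Filter.isBounded_le_of_top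
      _ = (ε : ℝ≥0∞) + h (S ω) := by
          refine limsup_const_add atTop _ _ ?_ ?_
          · exact Filter.isBounded_le_of_top
          · exact Filter.isCobounded_le_of_bot
      _ = h (S ω) + (ε : ℝ≥0∞) := add_comm _ _
  have hinv : (fun ω => h (S ω)) =ᵐ[η] h := ALS_ae_eq_comp_of_le hS hm hle
  set A' : Set Ω := {ω | ENNReal.ofReal α < h ω} with hA'
  have hA'm : MeasurableSet A' := measurableSet_lt measurable_const hm
  have hpre : S ⁻¹' A' =ᵐ[η] A' := by
    rw [Filter.eventuallyEq_set]
    filter_upwards [hinv] with ω hω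
    simp only [Set.mem_preimage, hA', Set.mem_setOf_eq, hω]
  rcases hErg.quasiErgodic.ae_empty_or_univ₀ hA'm.nullMeasurableSet hpre with h0 | h1
  · have hz : η A' = 0 := by rwa [MeasureTheory.ae_eq_empty] at h0
    rw [MeasureTheory.ae_iff]
    convert hz using 2
    ext ω
    simp [hA', not_le]
    exact Iff.rfl
  · exfalso
    have h1' : η A' = 1 := by
      rw [measure_congr h1]; simp
    have hsub : A' ⊆ {ω | ∃ n : ℕ, 1 ≤ n ∧ α * n < birkhoffSum S g n ω} := by
      intro ω hω
      have hfreq : ∃ᶠ n : ℕ in atTop,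
          ENNReal.ofReal α < ENNReal.ofReal (birkhoffSum S g n ω / n) :=
        Filter.frequently_lt_of_lt_limsup (by exact Filter.isCobounded_le_of_bot) hω
      obtain ⟨n, hn1, hn2⟩ := Filter.frequently_atTop.mp hfreq 1
      have hreal : α < birkhoffSum S g n ω / n := by
        by_contra hc
        exact absurd (ENNReal.ofReal_le_ofReal (not_lt.mp hc)) (not_le.mpr hn2)
      have hnpos : (0:ℝ) < n := by exact_mod_cast hn1
      exact ⟨n, hn1, (lt_div_iff₀ hnpos).mp hreal⟩
    have hfin := lt_of_le_of_lt (measure_mono hsub)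
      (ALS_maximal_lt_one hS hgm hgi hg0 hα hint)
    rw [h1'] at hfin
    exact lt_irrefl _ hfin

end ErgodicMax

/-- **Lemma 5.5** of Avila–Last–Simon, abstract form.  In the setting of Lemma 5.3 (probability
space `(Ω, η)`, `S` measure preserving and ergodic, `V_n : Ω → M₂(ℂ)` measurable with
`det V_n = 1`, `‖V_n(ω)‖ = ‖V_0(S^n ω)‖`, `∫ ‖V_0‖² dη < ∞`, `T_n(ω) = V_n(ω) V_0(ω)⁻¹`):
for every `L < ∞` and `ε > 0` there is `K < ∞` such that for a.e. `ω` with `‖V_0(ω)‖ < L` and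
every `2 × 2` complex matrix `C` with `‖C‖ < L`,
`limsup_n (1/n) Σ_{0 ≤ j ≤ n-1, ‖T_j(ω)C‖ ≥ K} ‖T_j(ω)C‖² ≤ ε`. -/
theorem stmt_16 {Ω : Type*} [MeasurableSpace Ω] (η : Measure Ω) [IsProbabilityMeasure η]
    (S : Ω → Ω) (hS : MeasurePreserving S η η) (hErg : Ergodic S η)
    (V : ℕ → Ω → Matrix (Fin 2) (Fin 2) ℂ) (hVmeas : ∀ n, Measurable (V n))
    (hVdet : ∀ n ω, (V n ω).det = 1)
    (hVnorm : ∀ n ω, ‖V n ω‖ = ‖V 0 (S^[n] ω)‖)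
    (hVL2 : (∫⁻ ω, ENNReal.ofReal (‖V 0 ω‖ ^ 2) ∂η) < ⊤) :
    ∀ L : ℝ, ∀ ε : ℝ, 0 < ε → ∃ K : ℝ,
      ∀ᵐ ω ∂η, ‖V 0 ω‖ < L →
        ∀ C : Matrix (Fin 2) (Fin 2) ℂ, ‖C‖ < L →
          Filter.limsup
            (fun n : ℕ => (1 / n : ℝ) *
              ∑ j ∈ Finset.range n,
                (if K ≤ ‖V j ω * (V 0 ω)⁻¹ * C‖ then ‖V j ω * (V 0 ω)⁻¹ * C‖ ^ 2 else 0))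
            atTop ≤ ε := by
  intro L ε hε
  rcases le_or_gt L 0 with hL | hL
  · refine ⟨1, ?_⟩
    filter_upwards [] with ω hω
    exact absurd (lt_of_le_of_lt (norm_nonneg _) hω) (not_lt.mpr hL)
  -- nondegenerate case
  set f : Ω → ℝ := fun ω => ‖V 0 ω‖ ^ 2 with hf
  have hfm : Measurable f := ((hVmeas 0).norm).pow_const 2
  have hfi : Integrable f η := by
    refine ⟨hfm.aestronglyMeasurable, ?_⟩
    rw [hasFiniteIntegral_iff_ofReal (Filter.Eventually.of_forall fun ω => by positivity)]
    exact hVL2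
  have hf0 : ∀ ω, 0 ≤ f ω := fun ω => by positivity
  set B : ℝ := 16 * L ^ 4 with hB
  have hBpos : 0 < B := by positivity
  set α : ℝ := ε / B with hα
  have hαpos : 0 < α := by positivity
  -- the truncated tail functions
  set gM : ℕ → Ω → ℝ := fun M ω => if (M : ℝ) ≤ f ω then f ω else 0 with hgM
  have hgMm : ∀ M, Measurable (gM M) := by
    intro M
    exact Measurable.ite (measurableSet_le measurable_const hfm) hfm measurable_const
  have hgM0 : ∀ M ω, 0 ≤ gM M ω := by
    intro M ω
    by_cases hMf : (M : ℝ) ≤ f ω <;> simp [hgM, hMf, hf0 ω]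
  have hgMle : ∀ M ω, gM M ω ≤ f ω := by
    intro M ω
    by_cases hMf : (M : ℝ) ≤ f ω <;> simp [hgM, hMf, hf0 ω]
  have hgMi : ∀ M, Integrable (gM M) η := by
    intro M
    refine Integrable.mono hfi (hgMm M).aestronglyMeasurable ?_
    filter_upwards [] with ω
    rw [Real.norm_eq_abs, Real.norm_eq_abs, abs_of_nonneg (hgM0 M ω), abs_of_nonneg (hf0 ω)]
    exact hgMle M ω
  -- choose truncation level M
  have htendM : Filter.Tendsto (fun M => ∫ ω, gM M ω ∂η) atTop (nhds 0) := by
    have h0 : (0:ℝ) = ∫ ω, (0:ℝ) ∂η := by simp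
    rw [h0]
    refine tendsto_integral_of_dominated_convergence f
      (fun M => (hgMm M).aestronglyMeasurable) hfi ?_ ?_
    · intro M
      filter_upwards [] with ω
      rw [Real.norm_eq_abs, abs_of_nonneg (hgM0 M ω)]
      exact hgMle M ω
    · filter_upwards [] with ω
      have hev : ∀ᶠ M : ℕ in atTop, gM M ω = 0 := by
        rw [Filter.eventually_atTop]
        refine ⟨⌊f ω⌋₊ + 1, fun M hM => ?_⟩
        have : f ω < (M : ℝ) := by
          calc f ω < (⌊f ω⌋₊ : ℝ) + 1 := Nat.lt_floor_add_one (f ω)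
            _ ≤ (M : ℝ) := by exact_mod_cast hM
        simp [hgM, not_le.mpr this]
      exact Filter.Tendsto.congr' (hev.mono fun M hM0 => hM0.symm) tendsto_const_nhds
  obtain ⟨M, hM⟩ := (htendM.eventually_lt_const hαpos).exists
  refine ⟨4 * L ^ 2 * Real.sqrt M, ?_⟩
  filter_upwards [ALS_ae_limsup_birkhoff_le hS hErg (hgMm M) (hgMi M) (hgM0 M) hαpos hM]
    with ω hω hωL C hC
  set K : ℝ := 4 * L ^ 2 * Real.sqrt M with hK
  -- matrix norm bound
  have hmat : ∀ j : ℕ, ‖V j ω * (V 0 ω)⁻¹ * C‖ ≤ 4 * L ^ 2 * ‖V 0 (S^[j] ω)‖ := by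
    intro j
    have h1 : ‖V j ω * (V 0 ω)⁻¹ * C‖ ≤ ‖V j ω‖ * ‖(V 0 ω)⁻¹‖ * ‖C‖ :=
      le_trans (norm_mul_le _ _)
        (mul_le_mul_of_nonneg_right (norm_mul_le _ _) (norm_nonneg _))
    have h2 : ‖(V 0 ω)⁻¹‖ ≤ 4 * ‖V 0 ω‖ := ALS_inv_norm_le _ (hVdet 0 ω)
    have h3 : ‖V j ω‖ = ‖V 0 (S^[j] ω)‖ := hVnorm j ω
    have hb : ‖(V 0 ω)⁻¹‖ ≤ 4 * L := le_trans h2 (by linarith)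
    calc ‖V j ω * (V 0 ω)⁻¹ * C‖ ≤ ‖V j ω‖ * ‖(V 0 ω)⁻¹‖ * ‖C‖ := h1
      _ = ‖V 0 (S^[j] ω)‖ * ‖(V 0 ω)⁻¹‖ * ‖C‖ := by rw [h3]
      _ ≤ ‖V 0 (S^[j] ω)‖ * (4 * L) * ‖C‖ :=
          mul_le_mul_of_nonneg_right
            (mul_le_mul_of_nonneg_left hb (norm_nonneg _)) (norm_nonneg _)
      _ ≤ ‖V 0 (S^[j] ω)‖ * (4 * L) * L :=
          mul_le_mul_of_nonneg_left hC.le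
            (mul_nonneg (norm_nonneg _) (by positivity))
      _ = 4 * L ^ 2 * ‖V 0 (S^[j] ω)‖ := by ring
  -- termwise bound
  have hterm : ∀ j : ℕ,
      (if K ≤ ‖V j ω * (V 0 ω)⁻¹ * C‖ then ‖V j ω * (V 0 ω)⁻¹ * C‖ ^ 2 else 0)
        ≤ B * gM M (S^[j] ω) := by
    intro j
    by_cases hKle : K ≤ ‖V j ω * (V 0 ω)⁻¹ * C‖
    · rw [if_pos hKle]
      have hs : Real.sqrt M ≤ ‖V 0 (S^[j] ω)‖ := by
        have := le_trans hKle (hmat j)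
        rw [hK] at this
        nlinarith [Real.sqrt_nonneg (M:ℝ)]
      have hMf : (M : ℝ) ≤ f (S^[j] ω) := by
        have := Real.sq_sqrt (show (0:ℝ) ≤ (M:ℝ) from Nat.cast_nonneg M)
        have hsq : Real.sqrt (M:ℝ) ^ 2 ≤ ‖V 0 (S^[j] ω)‖ ^ 2 := by
          exact pow_le_pow_left₀ (Real.sqrt_nonneg _) hs 2
        rw [this] at hsq
        exact hsq
      have hgf : gM M (S^[j] ω) = f (S^[j] ω) := if_pos hMf
      rw [hgf]
      calc ‖V j ω * (V 0 ω)⁻¹ * C‖ ^ 2 ≤ (4 * L ^ 2 * ‖V 0 (S^[j] ω)‖) ^ 2 :=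
            pow_le_pow_left₀ (norm_nonneg _) (hmat j) 2
        _ = B * f (S^[j] ω) := by rw [hB, hf]; ring
    · rw [if_neg hKle]
      exact mul_nonneg hBpos.le (hgM0 M _)
  -- average bound
  have havg : ∀ n : ℕ,
      (1 / n : ℝ) * ∑ j ∈ Finset.range n,
        (if K ≤ ‖V j ω * (V 0 ω)⁻¹ * C‖ then ‖V j ω * (V 0 ω)⁻¹ * C‖ ^ 2 else 0)
      ≤ B * (birkhoffSum S (gM M) n ω / n) := by
    intro n
    have hsum : ∑ j ∈ Finset.range n,
        (if K ≤ ‖V j ω * (V 0 ω)⁻¹ * C‖ then ‖V j ω * (V 0 ω)⁻¹ * C‖ ^ 2 else 0)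
        ≤ B * birkhoffSum S (gM M) n ω := by
      rw [birkhoffSum, Finset.mul_sum]
      exact Finset.sum_le_sum fun j _ => hterm j
    calc (1 / n : ℝ) * ∑ j ∈ Finset.range n,
        (if K ≤ ‖V j ω * (V 0 ω)⁻¹ * C‖ then ‖V j ω * (V 0 ω)⁻¹ * C‖ ^ 2 else 0)
        ≤ (1 / n : ℝ) * (B * birkhoffSum S (gM M) n ω) := by
          refine mul_le_mul_of_nonneg_left hsum ?_
          positivity
      _ = B * (birkhoffSum S (gM M) n ω / n) := by ring
  -- conclude
  have hBα : B * α = ε := by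
    rw [hα]
    field_simp
  refine le_of_forall_pos_le_add fun δ hδ => ?_
  have hδ' : (0:ℝ) < δ / B := by positivity
  have hlt : ENNReal.ofReal α < ENNReal.ofReal (α + δ / B) := by
    rw [ENNReal.ofReal_lt_ofReal_iff (by linarith)]
    linarith
  have hev : ∀ᶠ n : ℕ in atTop,
      ENNReal.ofReal (birkhoffSum S (gM M) n ω / n) < ENNReal.ofReal (α + δ / B) :=
    Filter.eventually_lt_of_limsup_lt (lt_of_le_of_lt hω hlt) Filter.isBounded_le_of_top
  have hevr : ∀ᶠ n : ℕ in atTop,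
      (1 / n : ℝ) * ∑ j ∈ Finset.range n,
        (if K ≤ ‖V j ω * (V 0 ω)⁻¹ * C‖ then ‖V j ω * (V 0 ω)⁻¹ * C‖ ^ 2 else 0)
      ≤ ε + δ := by
    filter_upwards [hev] with n hn
    have hb0 : 0 ≤ birkhoffSum S (gM M) n ω / n :=
      div_nonneg (Finset.sum_nonneg fun j _ => hgM0 M _) (Nat.cast_nonneg n)
    have hrn : birkhoffSum S (gM M) n ω / n < α + δ / B :=
      (ENNReal.ofReal_lt_ofReal_iff_of_nonneg hb0).mp hn
    calc (1 / n : ℝ) * ∑ j ∈ Finset.range n,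
        (if K ≤ ‖V j ω * (V 0 ω)⁻¹ * C‖ then ‖V j ω * (V 0 ω)⁻¹ * C‖ ^ 2 else 0)
        ≤ B * (birkhoffSum S (gM M) n ω / n) := havg n
      _ ≤ B * (α + δ / B) := mul_le_mul_of_nonneg_left hrn.le hBpos.le
      _ = B * α + B * (δ / B) := by ring
      _ = ε + δ := by rw [hBα]; field_simp
  have hlb : Filter.IsBoundedUnder (· ≥ ·) atTop
      (fun n : ℕ => (1 / n : ℝ) * ∑ j ∈ Finset.range n,
        (if K ≤ ‖V j ω * (V 0 ω)⁻¹ * C‖ then ‖V j ω * (V 0 ω)⁻¹ * C‖ ^ 2 else 0)) :=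
    Filter.isBoundedUnder_of ⟨0, fun n => mul_nonneg (by positivity)
      (Finset.sum_nonneg fun j _ => by split_ifs <;> positivity)⟩
  exact Filter.limsup_le_of_le hlb.isCoboundedUnder_flip hevr
end

section
/- (Variation of parameters identity (7.7)) For every n ≥ 0 and all x, x₀ ∈ ℝ, p_n(x) − p_n(x₀) = (x − x₀) · Σ_{m=0}^{n−1} ( p_n(x₀) q_m(x₀) − p_m(x₀) q_n(x₀) ) p_m(x). -/
open Polynomial

/-- Discrete Green's identity / summation by parts for two solutions of Jacobi
recurrences at spectral parameters `x` and `y`. -/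
lemma jacobi_green (a b : ℕ → ℝ) (x y : ℝ) (u v : ℤ → ℝ)
    (hu : ∀ m : ℕ, x * u (m : ℤ) =
      a (m + 1) * u ((m : ℤ) + 1) + b (m + 1) * u (m : ℤ) + a m * u ((m : ℤ) - 1))
    (hv : ∀ m : ℕ, y * v (m : ℤ) =
      a (m + 1) * v ((m : ℤ) + 1) + b (m + 1) * v (m : ℤ) + a m * v ((m : ℤ) - 1))
    (n : ℕ) :
    (x - y) * ∑ m ∈ Finset.range n, u (m : ℤ) * v (m : ℤ) =
      a n * (u (n : ℤ) * v ((n : ℤ) - 1) - u ((n : ℤ) - 1) * v (n : ℤ))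
        - a 0 * (u 0 * v (-1) - u (-1) * v 0) := by
  set W : ℕ → ℝ := fun k => a k * (u (k : ℤ) * v ((k : ℤ) - 1) - u ((k : ℤ) - 1) * v (k : ℤ))
    with hW
  have key : ∀ m : ℕ, (x - y) * (u (m : ℤ) * v (m : ℤ)) = W (m + 1) - W m := by
    intro m
    have h1 := hu m
    have h2 := hv m
    simp only [hW]
    push_cast
    have e1 : (m : ℤ) + 1 - 1 = (m : ℤ) := by ring
    rw [e1]
    linear_combination v (m : ℤ) * h1 - u (m : ℤ) * h2
  calc (x - y) * ∑ m ∈ Finset.range n, u (m : ℤ) * v (m : ℤ)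
      = ∑ m ∈ Finset.range n, (W (m + 1) - W m) := by
        rw [Finset.mul_sum]; exact Finset.sum_congr rfl fun m _ => key m
    _ = W n - W 0 := Finset.sum_range_sub W n
    _ = _ := by simp [hW]

/-- **Variation of parameters identity (7.7)** of Avila–Last–Simon.  Given Jacobi parameters
`(a_n)_{n ≥ 1}` (with the convention `a_0 = 1`) and `(b_n)_{n ≥ 1}`, and the first- and
second-kind orthogonal polynomials `p` and `q` determined by the common three-term recurrence
`x u_n = a_{n+1} u_{n+1} + b_{n+1} u_n + a_n u_{n-1}` with `p_{-1} = 0, p_0 = 1` and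
`q_{-1} = 1, q_0 = 0`, one has
`p_n(x) - p_n(x₀) = (x - x₀) Σ_{m=0}^{n-1} (p_n(x₀) q_m(x₀) - p_m(x₀) q_n(x₀)) p_m(x)`. -/
theorem stmt_18 (a b : ℕ → ℝ) (ha0 : a 0 = 1) (hapos : ∀ n : ℕ, 0 < a (n + 1))
    (p q : ℤ → Polynomial ℝ)
    (hpm1 : p (-1) = 0) (hp0 : p 0 = 1) (hqm1 : q (-1) = 1) (hq0 : q 0 = 0)
    (hprec : ∀ n : ℕ, X * p (n : ℤ) =
      C (a (n + 1)) * p ((n : ℤ) + 1) + C (b (n + 1)) * p (n : ℤ) + C (a n) * p ((n : ℤ) - 1))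
    (hqrec : ∀ n : ℕ, X * q (n : ℤ) =
      C (a (n + 1)) * q ((n : ℤ) + 1) + C (b (n + 1)) * q (n : ℤ) + C (a n) * q ((n : ℤ) - 1)) :
    ∀ (n : ℕ) (x x₀ : ℝ),
      (p (n : ℤ)).eval x - (p (n : ℤ)).eval x₀ =
        (x - x₀) * ∑ m ∈ Finset.range n,
          ((p (n : ℤ)).eval x₀ * (q (m : ℤ)).eval x₀
            - (p (m : ℤ)).eval x₀ * (q (n : ℤ)).eval x₀) * (p (m : ℤ)).eval x := by
  intro n x x₀
  -- evaluated recurrences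
  have hpev : ∀ (t : ℝ) (m : ℕ), t * (p (m : ℤ)).eval t =
      a (m + 1) * (p ((m : ℤ) + 1)).eval t + b (m + 1) * (p (m : ℤ)).eval t
        + a m * (p ((m : ℤ) - 1)).eval t := by
    intro t m
    have := congrArg (Polynomial.eval t) (hprec m)
    simpa using this
  have hqev : ∀ (t : ℝ) (m : ℕ), t * (q (m : ℤ)).eval t =
      a (m + 1) * (q ((m : ℤ) + 1)).eval t + b (m + 1) * (q (m : ℤ)).eval t
        + a m * (q ((m : ℤ) - 1)).eval t := by
    intro t m
    have := congrArg (Polynomial.eval t) (hqrec m)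
    simpa using this
  -- Wronskian constancy at x₀
  have hW : ∀ k : ℕ, a k * ((p (k : ℤ)).eval x₀ * (q ((k : ℤ) - 1)).eval x₀
      - (p ((k : ℤ) - 1)).eval x₀ * (q (k : ℤ)).eval x₀) = 1 := by
    intro k
    have h := jacobi_green a b x₀ x₀ (fun m => (p m).eval x₀) (fun m => (q m).eval x₀)
      (hpev x₀) (hqev x₀) k
    simp only [sub_self, zero_mul] at h
    have h0 : (p (0 : ℤ)).eval x₀ = 1 := by rw [hp0]; simp
    have h1 : (q (0 : ℤ)).eval x₀ = 0 := by rw [hq0]; simp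
    have h2 : (p (-1 : ℤ)).eval x₀ = 0 := by rw [hpm1]; simp
    have h3 : (q (-1 : ℤ)).eval x₀ = 1 := by rw [hqm1]; simp
    rw [h0, h1, h2, h3, ha0] at h
    linarith [h]
  -- the second solution at x₀
  set v : ℤ → ℝ := fun m =>
    (p (n : ℤ)).eval x₀ * (q m).eval x₀ - (p m).eval x₀ * (q (n : ℤ)).eval x₀ with hv
  have hvrec : ∀ m : ℕ, x₀ * v (m : ℤ) =
      a (m + 1) * v ((m : ℤ) + 1) + b (m + 1) * v (m : ℤ) + a m * v ((m : ℤ) - 1) := by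
    intro m
    simp only [hv]
    linear_combination (p (n : ℤ)).eval x₀ * hqev x₀ m - (q (n : ℤ)).eval x₀ * hpev x₀ m
  have h := jacobi_green a b x x₀ (fun m => (p m).eval x) v (hpev x) hvrec n
  have hvn : v (n : ℤ) = 0 := by simp only [hv]; ring
  have hvm1 : v (-1) = (p (n : ℤ)).eval x₀ := by
    simp [hv, hpm1, hqm1]
  have h0 : (p (0 : ℤ)).eval x = 1 := by rw [hp0]; simp
  have h2 : (p (-1 : ℤ)).eval x = 0 := by rw [hpm1]; simp
  rw [hvn, hvm1, h0, h2, ha0] at h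
  have hWn := hW n
  have hsum : ∑ m ∈ Finset.range n, (p (m : ℤ)).eval x * v (m : ℤ) =
      ∑ m ∈ Finset.range n, ((p (n : ℤ)).eval x₀ * (q (m : ℤ)).eval x₀
        - (p (m : ℤ)).eval x₀ * (q (n : ℤ)).eval x₀) * (p (m : ℤ)).eval x := by
    exact Finset.sum_congr rfl fun m _ => by simp only [hv]; ring
  rw [hsum] at h
  -- h : (x - x₀) * Σ ... = a n * ((p n).eval x * v (n-1) - ... * 0) - 1 * (1 * p_n(x₀) - 0 * v 0)
  have hav : a n * v ((n : ℤ) - 1) = 1 := by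
    simpa [hv, mul_sub, mul_comm, mul_left_comm, mul_assoc] using hWn
  linear_combination -h - (p (n : ℤ)).eval x * hav
end

section
/- (Derivative formula (7.8)) For every n ≥ 0 and every x₀ ∈ ℝ, the derivative of p_n satisfies p_n′(x₀) = Σ_{m=0}^{n−1} ( p_n(x₀) q_m(x₀) − p_m(x₀) q_n(x₀) ) p_m(x₀). -/
open Polynomial

/-- **Derivative formula (7.8)** of Avila–Last–Simon.  With `p` and `q` the first- and
second-kind orthogonal polynomials for Jacobi parameters `(a_n, b_n)` (convention `a_0 = 1`),
`p_n′(x₀) = Σ_{m=0}^{n-1} (p_n(x₀) q_m(x₀) - p_m(x₀) q_n(x₀)) p_m(x₀)`. -/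
theorem stmt_19 (a b : ℕ → ℝ) (ha0 : a 0 = 1) (hapos : ∀ n : ℕ, 0 < a (n + 1))
    (p q : ℤ → Polynomial ℝ)
    (hpm1 : p (-1) = 0) (hp0 : p 0 = 1) (hqm1 : q (-1) = 1) (hq0 : q 0 = 0)
    (hprec : ∀ n : ℕ, X * p (n : ℤ) =
      C (a (n + 1)) * p ((n : ℤ) + 1) + C (b (n + 1)) * p (n : ℤ) + C (a n) * p ((n : ℤ) - 1))
    (hqrec : ∀ n : ℕ, X * q (n : ℤ) =
      C (a (n + 1)) * q ((n : ℤ) + 1) + C (b (n + 1)) * q (n : ℤ) + C (a n) * q ((n : ℤ) - 1)) :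
    ∀ (n : ℕ) (x₀ : ℝ),
      (derivative (p (n : ℤ))).eval x₀ =
        ∑ m ∈ Finset.range n,
          ((p (n : ℤ)).eval x₀ * (q (m : ℤ)).eval x₀
            - (p (m : ℤ)).eval x₀ * (q (n : ℤ)).eval x₀) * (p (m : ℤ)).eval x₀ := by
  -- the candidate sum, as a polynomial
  set S : ℕ → Polynomial ℝ := fun k => ∑ m ∈ Finset.range k,
    (p (k : ℤ) * q (m : ℤ) - p (m : ℤ) * q (k : ℤ)) * p (m : ℤ) with hS
  -- Wronskian identity
  have W : ∀ n : ℕ, C (a (n + 1)) * (p ((n : ℤ) + 1) * q (n : ℤ) - p (n : ℤ) * q ((n : ℤ) + 1)) = 1 := by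
    intro n
    induction n with
    | zero =>
      have h := hqrec 0
      simp only [Nat.cast_zero, zero_add, zero_sub, hq0, hqm1, ha0, map_one, mul_zero, mul_one,
        add_zero, zero_mul] at h
      simp only [Nat.cast_zero, zero_add, hq0, hp0, mul_zero, one_mul, zero_sub]
      linear_combination h
    | succ n ih =>
      have c1 : ((n + 1 : ℕ) : ℤ) = (n : ℤ) + 1 := by push_cast; ring
      have c3 : ((n : ℤ) + 1 + 1) = (n : ℤ) + 2 := by ring
      have c4 : ((n : ℤ) + 1 - 1) = (n : ℤ) := by ring
      have hp2 := hprec (n + 1)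
      have hq2 := hqrec (n + 1)
      rw [c1, c3, c4] at hp2 hq2
      rw [c1, c3]
      linear_combination (-(q ((n : ℤ) + 1))) * hp2 + (p ((n : ℤ) + 1)) * hq2 + ih
  have hc : ∀ k : ℕ, (C (a (k + 1)) : Polynomial ℝ) ≠ 0 := fun k => by
    simpa using (hapos k).ne'
  -- main polynomial identity, two-step induction
  have main : ∀ n : ℕ, derivative (p (n : ℤ)) = S n ∧ derivative (p ((n : ℤ) + 1)) = S (n + 1) := by
    intro n
    induction n with
    | zero =>
      constructor
      · simp [hS, hp0]
      · -- explicit formulas for p 1 and q 1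
        have hp1 := hprec 0
        have hq1 := hqrec 0
        simp only [Nat.cast_zero, zero_add, zero_sub, hp0, hpm1, hq0, hqm1, ha0, map_one,
          mul_zero, mul_one, add_zero, zero_mul] at hp1 hq1
        -- hp1 : X = C (a 1) * p 1 + C (b 1) ;  hq1 : 0 = C (a 1) * q 1 + 1
        have p1eq : C (a 1) * p 1 = X - C (b 1) := by linear_combination -hp1
        have q1eq : C (a 1) * q 1 = -1 := by linear_combination -hq1
        simp only [Nat.cast_zero, zero_add]
        apply mul_left_cancel₀ (hc 0)
        have hd : C (a 1) * derivative (p 1) = 1 := by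
          have h := congrArg derivative p1eq
          rw [derivative_mul, derivative_C, zero_mul, zero_add, derivative_sub,
            derivative_X, derivative_C, sub_zero] at h
          exact h
        rw [hd, hS]
        simp only [Finset.sum_range_one, Nat.cast_zero, Nat.cast_one, hp0, hq0, mul_zero,
          mul_one, zero_sub]
        linear_combination q1eq
    | succ n ih =>
      have c1 : ((n + 1 : ℕ) : ℤ) = (n : ℤ) + 1 := by push_cast; ring
      have c2 : ((n + 2 : ℕ) : ℤ) = (n : ℤ) + 2 := by push_cast; ring
      have c3 : ((n : ℤ) + 1 + 1) = (n : ℤ) + 2 := by ring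
      have c4 : ((n : ℤ) + 1 - 1) = (n : ℤ) := by ring
      have hp2 := hprec (n + 1)
      have hq2 := hqrec (n + 1)
      rw [c1, c3, c4] at hp2 hq2
      have en : n + 1 + 1 = n + 2 := rfl
      rw [en] at hp2 hq2
      constructor
      · rw [c1]; exact ih.2
      -- derivative side
      have hD : C (a (n + 2)) * derivative (p ((n : ℤ) + 2))
          = p ((n : ℤ) + 1) + (X - C (b (n + 2))) * S (n + 1) - C (a (n + 1)) * S n := by
        have h := congrArg derivative hp2
        rw [derivative_mul, derivative_X, one_mul, derivative_add, derivative_add,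
          derivative_mul, derivative_C, zero_mul, zero_add, derivative_mul, derivative_C,
          zero_mul, zero_add, derivative_mul, derivative_C, zero_mul, zero_add] at h
        rw [ih.1, ih.2] at h
        linear_combination -h
      -- sum side
      have hSum : C (a (n + 2)) * S (n + 2)
          = p ((n : ℤ) + 1) + (X - C (b (n + 2))) * S (n + 1) - C (a (n + 1)) * S n := by
        rw [hS]
        simp only []
        rw [c2, c1, Finset.mul_sum]
        have step1 : ∀ m ∈ Finset.range (n + 2),
            C (a (n + 2)) * ((p ((n : ℤ) + 2) * q (m : ℤ) - p (m : ℤ) * q ((n : ℤ) + 2)) * p (m : ℤ))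
            = (X - C (b (n + 2))) * ((p ((n : ℤ) + 1) * q (m : ℤ) - p (m : ℤ) * q ((n : ℤ) + 1)) * p (m : ℤ))
              - C (a (n + 1)) * ((p ((n : ℤ)) * q (m : ℤ) - p (m : ℤ) * q ((n : ℤ))) * p (m : ℤ)) := by
          intro m _
          linear_combination (-(q (m : ℤ) * p (m : ℤ))) * hp2 + (p (m : ℤ) * p (m : ℤ)) * hq2
        rw [Finset.sum_congr rfl step1, Finset.sum_sub_distrib, ← Finset.mul_sum, ← Finset.mul_sum]
        have e1 : ∑ m ∈ Finset.range (n + 2),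
              ((p ((n : ℤ) + 1) * q (m : ℤ) - p (m : ℤ) * q ((n : ℤ) + 1)) * p (m : ℤ))
            = ∑ m ∈ Finset.range (n + 1),
              ((p ((n : ℤ) + 1) * q (m : ℤ) - p (m : ℤ) * q ((n : ℤ) + 1)) * p (m : ℤ)) := by
          rw [Finset.sum_range_succ, c1]; ring
        have e2 : ∑ m ∈ Finset.range (n + 2),
              ((p ((n : ℤ)) * q (m : ℤ) - p (m : ℤ) * q ((n : ℤ))) * p (m : ℤ))
            = (∑ m ∈ Finset.range n,
              ((p ((n : ℤ)) * q (m : ℤ) - p (m : ℤ) * q ((n : ℤ))) * p (m : ℤ)))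
              + (p ((n : ℤ)) * q ((n : ℤ) + 1) - p ((n : ℤ) + 1) * q ((n : ℤ))) * p ((n : ℤ) + 1) := by
          rw [Finset.sum_range_succ, Finset.sum_range_succ, c1]; ring
        rw [e1, e2]
        linear_combination (p ((n : ℤ) + 1)) * W n
      rw [c1, c3]
      have en2 : n + 1 + 1 = n + 2 := rfl
      rw [en2]
      exact mul_left_cancel₀ (hc (n + 1)) (hD.trans hSum.symm)
  intro n x₀
  have h := congrArg (eval x₀) (main n).1
  rw [hS] at h
  simpa [eval_finset_sum] using h
end
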